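/- arXiv:2602.02068 — 7 statements merged into one kernel-verified Lean document; each statement's English description precedes it below -/
import Mathlib

section
/- Let {α_k} and {c_k} be sequences of nonnegative real numbers indexed by k = 0,...,n satisfying α_{k+1} ≤ α_k(1 + τ α_k^s) + τ c_k for some s > 0 and τ > 0. Set α = max(1, α_0) and a_k = 1 + max_{0 ≤ i ≤ k} c_i. Then for every k with t_k = kτ < 1/(s α^s a_k), one has α_k ≤ α / (1 - s α^s t_k a_k)^{1/s}. -/
open Real in

lemma bern {t r : ℝ} (ht : 0 < t) (hr0 : 0 < r) (hr1 : r ≤ 1) :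
    1 + t * (1 - r) ≤ r ^ (-t) := by
  have key : AntitoneOn (fun x : ℝ => x ^ (-t) + t * x) (Set.Icc r 1) := by
    apply antitoneOn_of_deriv_nonpos (convex_Icc r 1)
    · apply ContinuousOn.add
      · exact ContinuousOn.rpow_const continuousOn_id (fun x hx => Or.inl (ne_of_gt (lt_of_lt_of_le hr0 hx.1)))
      · exact (continuous_const.mul continuous_id).continuousOn
    · intro x hx
      rw [interior_Icc] at hx
      have hx0 : 0 < x := hr0.trans hx.1
      apply DifferentiableAt.differentiableWithinAt
      exact (Real.differentiableAt_rpow_const_of_ne _ hx0.ne').add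
        ((differentiable_id.const_mul t).differentiableAt)
    · intro x hx
      rw [interior_Icc] at hx
      have hx0 : 0 < x := hr0.trans hx.1
      have hd : HasDerivAt (fun x : ℝ => x ^ (-t) + t * x) (-t * x ^ (-t - 1) + t * 1) x :=
        (Real.hasDerivAt_rpow_const (Or.inl hx0.ne')).add ((hasDerivAt_id x).const_mul t)
      rw [hd.deriv]
      have h1 : 1 ≤ x ^ (-t - 1) :=
        Real.one_le_rpow_of_pos_of_le_one_of_nonpos hx0 hx.2.le (by linarith)
      nlinarith
  have h := key (Set.left_mem_Icc.2 hr1) (Set.right_mem_Icc.2 hr1) hr1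
  simp only [Real.one_rpow] at h
  nlinarith

open Real in
lemma step {s A a τ c v : ℝ} (hs : 0 < s) (hA : 1 ≤ A) (ha : 1 ≤ a)
    (hτ : 0 < τ) (hc : 0 ≤ c) (hca : c ≤ a - 1) (hv1 : v ≤ 1)
    (hv' : 0 < v - s * A ^ s * a * τ) :
    (A / v ^ (1/s)) * (1 + τ * (A / v ^ (1/s)) ^ s) + τ * c
      ≤ A / (v - s * A ^ s * a * τ) ^ (1/s) := by
  have hA0 : 0 < A := lt_of_lt_of_le one_pos hA
  have ha0 : 0 < a := lt_of_lt_of_le one_pos ha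
  have hAs : 0 < A ^ s := Real.rpow_pos_of_pos hA0 s
  have hAs1 : 1 ≤ A ^ s := Real.one_le_rpow hA hs.le
  have hδ : 0 < s * A ^ s * a * τ := mul_pos (mul_pos (mul_pos hs hAs) ha0) hτ
  set w := v - s * A ^ s * a * τ with hw
  have hw0 : 0 < w := hv'
  have hv0 : 0 < v := by linarith
  have hP : 0 < v ^ (1/s) := Real.rpow_pos_of_pos hv0 _
  have hP1 : v ^ (1/s) ≤ 1 := Real.rpow_le_one hv0.le hv1 (by positivity)
  have hQ : 0 < w ^ (1/s) := Real.rpow_pos_of_pos hw0 _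
  have hBs : (A / v ^ (1/s)) ^ s = A ^ s / v := by
    rw [Real.div_rpow hA0.le hP.le, ← Real.rpow_mul hv0.le, one_div_mul_cancel hs.ne', Real.rpow_one]
  have hr0 : 0 < w / v := div_pos hw0 hv0
  have hr1 : w / v ≤ 1 := (div_le_one hv0).2 (by linarith)
  have hkey := bern (t := 1/s) (by positivity) hr0 hr1
  have h1 : (w / v) ^ (-(1/s)) = v ^ (1/s) / w ^ (1/s) := by
    rw [Real.rpow_neg hr0.le, Real.div_rpow hw0.le hv0.le, inv_div]
  rw [h1] at hkey
  have h2 : 1 - w / v = (s * A ^ s * a * τ) / v := by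
    field_simp [hw]; linarith
  rw [h2] at hkey
  have h3 : 1 / s * (s * A ^ s * a * τ / v) = A ^ s * a * τ / v := by
    field_simp
  rw [h3] at hkey
  -- hkey : 1 + A ^ s * a * τ / v ≤ v ^ (1/s) / w ^ (1/s)
  have h4 : (A / v ^ (1/s)) * (1 + A ^ s * a * τ / v) ≤ A / w ^ (1/s) := by
    have : A / w ^ (1/s) = (A / v ^ (1/s)) * (v ^ (1/s) / w ^ (1/s)) := by
      field_simp
    rw [this]
    exact mul_le_mul_of_nonneg_left hkey (by positivity)
  rw [hBs]
  have hu : 1 ≤ (A / v ^ (1/s)) * (A ^ s / v) := by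
    have hu1 : 1 ≤ A / v ^ (1/s) := (one_le_div hP).2 (le_trans hP1 hA)
    have hu2 : 1 ≤ A ^ s / v := (one_le_div hv0).2 (le_trans hv1 hAs1)
    nlinarith
  -- final
  have hfin : (A / v ^ (1/s)) * (1 + τ * (A ^ s / v)) + τ * c
      ≤ (A / v ^ (1/s)) * (1 + A ^ s * a * τ / v) := by
    have hz : A ^ s * a * τ / v = (A ^ s / v) * (a * τ) := by ring
    rw [hz]
    set u := A / v ^ (1/s) with hu'
    set z := A ^ s / v with hz'
    have h5 : 0 ≤ (u * z - 1) * (a - 1) := mul_nonneg (by linarith) (by linarith)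
    nlinarith [mul_nonneg hτ.le h5, mul_nonneg hτ.le (by linarith : (0:ℝ) ≤ a - 1 - c)]
  calc (A / v ^ (1/s)) * (1 + τ * (A ^ s / v)) + τ * c
      ≤ (A / v ^ (1/s)) * (1 + A ^ s * a * τ / v) := hfin
    _ ≤ A / w ^ (1/s) := h4

open Real in
lemma mono_aux {τ s x y : ℝ} (hτ : 0 < τ) (hs : 0 < s) (hx : 0 ≤ x) (hxy : x ≤ y) :
    x * (1 + τ * x ^ s) ≤ y * (1 + τ * y ^ s) := by
  have hy : 0 ≤ y := hx.trans hxy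
  have h1 : x ^ s ≤ y ^ s := Real.rpow_le_rpow hx hxy hs.le
  have h2 : 0 ≤ x ^ s := Real.rpow_nonneg hx s
  apply mul_le_mul hxy (by nlinarith) (by nlinarith) hy

theorem stmt0 (n : ℕ) (α c : ℕ → ℝ) (s τ : ℝ) (hs : 0 < s) (hτ : 0 < τ)
    (hαnn : ∀ k ≤ n, 0 ≤ α k) (hcnn : ∀ k ≤ n, 0 ≤ c k)
    (hrec : ∀ k < n, α (k + 1) ≤ α k * (1 + τ * α k ^ s) + τ * c k) :
    ∀ k ≤ n,
      (k : ℝ) * τ < 1 / (s * (max 1 (α 0)) ^ s *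
          (1 + (Finset.range (k + 1)).sup' ⟨0, Finset.mem_range.2 (Nat.succ_pos k)⟩ c)) →
      α k ≤ (max 1 (α 0)) /
        (1 - s * (max 1 (α 0)) ^ s * ((k : ℝ) * τ) *
          (1 + (Finset.range (k + 1)).sup' ⟨0, Finset.mem_range.2 (Nat.succ_pos k)⟩ c)) ^ (1 / s) := by
  set A := max 1 (α 0) with hAdef
  have hA : 1 ≤ A := le_max_left _ _
  have hA0 : 0 < A := lt_of_lt_of_le one_pos hA
  have hAs : 0 < A ^ s := Real.rpow_pos_of_pos hA0 s
  have hc0 : 0 ≤ c 0 := hcnn 0 (Nat.zero_le n)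
  intro k
  induction k with
  | zero =>
    intro _ _
    simp only [Nat.cast_zero, zero_mul, mul_zero, zero_mul, sub_zero, Real.one_rpow, div_one]
    exact le_max_right _ _
  | succ k ih =>
    intro hk1 hcond
    have hk : k ≤ n := Nat.le_of_succ_le hk1
    set M' := (Finset.range (k + 1 + 1)).sup' ⟨0, Finset.mem_range.2 (Nat.succ_pos (k+1))⟩ c with hM'
    set M := (Finset.range (k + 1)).sup' ⟨0, Finset.mem_range.2 (Nat.succ_pos k)⟩ c with hM
    have hMM' : M ≤ M' := by
      apply Finset.sup'_mono c (Finset.range_subset_range.2 (by omega))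
    have hM0 : 0 ≤ M := le_trans hc0 (Finset.le_sup' c (Finset.mem_range.2 (Nat.succ_pos k)))
    have hM'0 : 0 ≤ M' := le_trans hM0 hMM'
    have ha' : (1:ℝ) ≤ 1 + M' := by linarith
    have ha : (1:ℝ) ≤ 1 + M := by linarith
    have hden' : 0 < s * A ^ s * (1 + M') := by positivity
    have hden : 0 < s * A ^ s * (1 + M) := by positivity
    -- condition for k
    have hcondk : (k : ℝ) * τ < 1 / (s * A ^ s * (1 + M)) := by
      have h1 : (k : ℝ) * τ < ((k:ℕ)+1 : ℝ) * τ := by nlinarith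
      have h2 : 1 / (s * A ^ s * (1 + M')) ≤ 1 / (s * A ^ s * (1 + M)) := by
        apply one_div_le_one_div_of_le hden
        nlinarith
      push_cast at hcond
      linarith
    have hih := ih hk hcondk
    -- positivity of denominators
    have hv'pos : 0 < 1 - s * A ^ s * (((k:ℝ)+1) * τ) * (1 + M') := by
      have := (lt_div_iff₀ hden').1 (by push_cast at hcond; linarith : ((k:ℝ)+1) * τ < 1 / (s * A ^ s * (1 + M')))
      nlinarith
    set v := 1 - s * A ^ s * ((k:ℝ) * τ) * (1 + M') with hv
    have hvsub : v - s * A ^ s * (1 + M') * τ = 1 - s * A ^ s * (((k:ℝ)+1) * τ) * (1 + M') := by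
      rw [hv]; ring
    have hw0 : 0 < v - s * A ^ s * (1 + M') * τ := by rw [hvsub]; exact hv'pos
    have hδ : 0 < s * A ^ s * (1 + M') * τ := by positivity
    have hv0 : 0 < v := by linarith
    have hv1 : v ≤ 1 := by
      have : 0 ≤ s * A ^ s * ((k:ℝ) * τ) * (1 + M') := by positivity
      linarith
    -- u (the denominator in ih) vs v
    set u := 1 - s * A ^ s * ((k:ℝ) * τ) * (1 + M) with hu
    have hvu : v ≤ u := by
      rw [hv, hu]
      have : 0 ≤ s * A ^ s * ((k:ℝ) * τ) := by positivity
      nlinarith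
    have hu0 : 0 < u := lt_of_lt_of_le hv0 hvu
    have hγ : A / u ^ (1/s) ≤ A / v ^ (1/s) := by
      apply div_le_div_of_nonneg_left hA0.le (Real.rpow_pos_of_pos hv0 _)
      exact Real.rpow_le_rpow hv0.le hvu (by positivity)
    have hαk : α k ≤ A / v ^ (1/s) := le_trans hih hγ
    have hck : 0 ≤ c k := hcnn k hk
    have hck' : c k ≤ (1 + M') - 1 := by
      simp only [add_sub_cancel_left]
      exact Finset.le_sup' c (Finset.mem_range.2 (by omega))
    have hstep := step hs hA ha' hτ hck hck' hv1 hw0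
    calc α (k + 1) ≤ α k * (1 + τ * α k ^ s) + τ * c k := hrec k (by omega)
      _ ≤ (A / v ^ (1/s)) * (1 + τ * (A / v ^ (1/s)) ^ s) + τ * c k := by
          have := mono_aux hτ hs (hαnn k hk) hαk
          linarith
      _ ≤ A / (v - s * A ^ s * (1 + M') * τ) ^ (1/s) := hstep
      _ = A / (1 - s * A ^ s * ((↑(k+1):ℝ) * τ) * (1 + M')) ^ (1/s) := by
          rw [hvsub]; push_cast; ring_nf
end

section
/- Let H be a real Hilbert space, A a self-adjoint operator with (Aφ,φ) ≥ ν‖φ‖² for ν > 0, C bounded symmetric nonnegative with norm c, and γ, δ > 0, L = γA + δC. Then for every ε with 0 < ε < γ/δ and every φ ∈ D(A): ‖Lφ‖ ≥ γ̂ ‖Aφ‖, where γ̂ = sqrt( γ(γ − εδ) / (1 + (c²δ/(εγ²ν²))(γ − εδ)) ). -/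
open scoped RealInnerProductSpace

set_option maxHeartbeats 1000000 in
theorem stmt2 {H : Type*} [NormedAddCommGroup H] [InnerProductSpace ℝ H] [CompleteSpace H]
    (A : H →ₗ[ℝ] H) (C : H →L[ℝ] H) (ν γ δ : ℝ) (hν : 0 < ν) (hγ : 0 < γ) (hδ : 0 < δ)
    (hAsym : ∀ x y : H, ⟪A x, y⟫ = ⟪x, A y⟫)
    (hApos : ∀ x : H, ν * ‖x‖ ^ 2 ≤ ⟪A x, x⟫)
    (hCsym : ∀ x y : H, ⟪C x, y⟫ = ⟪x, C y⟫)
    (hCpos : ∀ x : H, 0 ≤ ⟪C x, x⟫) :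
    ∀ ε : ℝ, 0 < ε → ε < γ / δ → ∀ φ : H,
      Real.sqrt (γ * (γ - ε * δ) /
          (1 + (‖C‖ ^ 2 * δ / (ε * γ ^ 2 * ν ^ 2)) * (γ - ε * δ))) * ‖A φ‖ ≤
        ‖γ • A φ + δ • C φ‖ := by
  intro ε hε hεlt φ
  have hβ : 0 < γ - ε * δ := by
    have := (lt_div_iff₀ hδ).mp hεlt
    linarith
  set a := ‖A φ‖ with ha
  set b := ‖C φ‖ with hbdef
  set p := ‖φ‖ with hpdef
  set c := ‖C‖ with hcdef
  set ℓ := ‖γ • A φ + δ • C φ‖ with hl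
  have hc0 : (0:ℝ) ≤ c := norm_nonneg _
  have hℓ0 : (0:ℝ) ≤ ℓ := norm_nonneg _
  have ha0 : (0:ℝ) ≤ a := norm_nonneg _
  have hb0 : (0:ℝ) ≤ b := norm_nonneg _
  -- expansion of ℓ²
  have hexp : ℓ ^ 2 = γ ^ 2 * a ^ 2 + 2 * (γ * δ * ⟪A φ, C φ⟫) + δ ^ 2 * b ^ 2 := by
    rw [hl, @norm_add_sq_real, norm_smul, norm_smul, real_inner_smul_left,
      real_inner_smul_right]
    simp [Real.norm_eq_abs, abs_of_pos hγ, abs_of_pos hδ]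
    ring
  -- lower bound on ℓ from testing with φ
  have hℓp : γ * ν * p ≤ ℓ := by
    have hip : γ * (ν * p ^ 2) ≤ ⟪γ • A φ + δ • C φ, φ⟫ := by
      rw [inner_add_left, real_inner_smul_left, real_inner_smul_left]
      have h1 := hApos φ
      have h2 := hCpos φ
      nlinarith [mul_le_mul_of_nonneg_left h1 hγ.le,
        mul_nonneg hδ.le h2]
    have h3 : ⟪γ • A φ + δ • C φ, φ⟫ ≤ ℓ * p := real_inner_le_norm _ _
    rcases (norm_nonneg φ).eq_or_lt with hp | hp
    · rw [hpdef, ← hp]; simpa using hℓ0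
    · have : γ * ν * p * p ≤ ℓ * p := by nlinarith
      exact le_of_mul_le_mul_right this hp
  have hb : b ≤ c * p := C.le_opNorm φ
  have hcb : γ * ν * b ≤ c * ℓ := by
    nlinarith [mul_le_mul_of_nonneg_left hb (mul_nonneg hγ.le hν.le),
      mul_le_mul_of_nonneg_left hℓp hc0]
  have hkey2 : γ ^ 2 * ν ^ 2 * b ^ 2 ≤ c ^ 2 * ℓ ^ 2 := by
    nlinarith [mul_self_le_mul_self (by positivity : (0:ℝ) ≤ γ * ν * b) hcb]
  have hs : -(a * b) ≤ ⟪A φ, C φ⟫ := by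
    have h1 := abs_real_inner_le_norm (A φ) (C φ)
    have h2 := neg_abs_le ⟪A φ, C φ⟫
    linarith
  -- scaled auxiliary facts
  have h5' : ε * γ ^ 2 * ν ^ 2 * ℓ ^ 2
      = ε * γ ^ 2 * ν ^ 2 * (γ ^ 2 * a ^ 2 + 2 * (γ * δ * ⟪A φ, C φ⟫) + δ ^ 2 * b ^ 2) := by
    rw [hexp]
  have fact1 : γ ^ 2 * ν ^ 2 * δ * (γ - ε * δ) * b ^ 2
      ≤ c ^ 2 * δ * (γ - ε * δ) * ℓ ^ 2 := by
    nlinarith [mul_le_mul_of_nonneg_left hkey2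
      (by positivity : (0:ℝ) ≤ δ * (γ - ε * δ))]
  have hp1 : (0:ℝ) ≤ 2 * γ * δ * ε * γ ^ 2 * ν ^ 2 * (⟪A φ, C φ⟫ + a * b) :=
    mul_nonneg (by positivity) (by linarith)
  have hp2 : (0:ℝ) ≤ γ * δ * γ ^ 2 * ν ^ 2 * (ε * a - b) ^ 2 := by positivity
  have hbig : ε * γ ^ 2 * ν ^ 2 * (γ * (γ - ε * δ) * a ^ 2)
      ≤ ε * γ ^ 2 * ν ^ 2 * ℓ ^ 2 + c ^ 2 * δ * (γ - ε * δ) * ℓ ^ 2 := by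
    linarith [h5', fact1, hp1, hp2]
  have hM : (0:ℝ) < ε * γ ^ 2 * ν ^ 2 := by positivity
  have hD : (0:ℝ) < 1 + c ^ 2 * δ / (ε * γ ^ 2 * ν ^ 2) * (γ - ε * δ) := by positivity
  have he : ε * γ ^ 2 * ν ^ 2 * (ℓ ^ 2 * (1 + c ^ 2 * δ / (ε * γ ^ 2 * ν ^ 2) * (γ - ε * δ)))
      = ε * γ ^ 2 * ν ^ 2 * ℓ ^ 2 + c ^ 2 * δ * (γ - ε * δ) * ℓ ^ 2 := by
    field_simp
  have h7 : γ * (γ - ε * δ) * a ^ 2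
      ≤ ℓ ^ 2 * (1 + c ^ 2 * δ / (ε * γ ^ 2 * ν ^ 2) * (γ - ε * δ)) := by
    have h8 : ε * γ ^ 2 * ν ^ 2 * (γ * (γ - ε * δ) * a ^ 2)
        ≤ ε * γ ^ 2 * ν ^ 2 *
          (ℓ ^ 2 * (1 + c ^ 2 * δ / (ε * γ ^ 2 * ν ^ 2) * (γ - ε * δ))) := by
      rw [he]; exact hbig
    exact le_of_mul_le_mul_left h8 hM
  have hQ : γ * (γ - ε * δ) / (1 + c ^ 2 * δ / (ε * γ ^ 2 * ν ^ 2) * (γ - ε * δ)) * a ^ 2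
      ≤ ℓ ^ 2 := by
    rw [div_mul_eq_mul_div, div_le_iff₀ hD]
    exact h7
  have hX0 : (0:ℝ) ≤ γ * (γ - ε * δ) / (1 + c ^ 2 * δ / (ε * γ ^ 2 * ν ^ 2) * (γ - ε * δ)) := by
    positivity
  calc Real.sqrt (γ * (γ - ε * δ) /
          (1 + c ^ 2 * δ / (ε * γ ^ 2 * ν ^ 2) * (γ - ε * δ))) * a
      = Real.sqrt (γ * (γ - ε * δ) /
          (1 + c ^ 2 * δ / (ε * γ ^ 2 * ν ^ 2) * (γ - ε * δ)) * a ^ 2) := by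
        rw [Real.sqrt_mul hX0, Real.sqrt_sq ha0]
    _ ≤ Real.sqrt (ℓ ^ 2) := Real.sqrt_le_sqrt hQ
    _ = ℓ := by rw [Real.sqrt_sq hℓ0]
end

section
/- Let H be a real Hilbert space, A self-adjoint positive definite with A ≥ νI (ν > 0), and B a closed linear operator. Suppose D₁ ⊆ D(A) with B mapping D₁ into D(A) and (ABφ, Bφ) ≤ c₃² ‖Aφ‖² for all φ ∈ D₁ with c₃ > 0. If R₁ = A(D₁) is dense in H, then ‖A^{1/2} Bφ‖ ≤ c₃ ‖Aφ‖ for every φ ∈ D(A). -/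
open scoped RealInnerProductSpace

theorem stmt5 {H : Type*} [NormedAddCommGroup H] [InnerProductSpace ℝ H] [CompleteSpace H]
    (A S : H →ₗ[ℝ] H) (B : H →ₗ.[ℝ] H) (D₁ : Submodule ℝ H) (ν c₃ : ℝ)
    (hν : 0 < ν) (hc₃ : 0 < c₃)
    (hAsym : ∀ x y : H, ⟪A x, y⟫ = ⟪x, A y⟫)
    (hApos : ∀ x : H, ν * ‖x‖ ^ 2 ≤ ⟪A x, x⟫)
    (hAbij : Function.Bijective A)
    -- S is the positive square root of A
    (hSsym : ∀ x y : H, ⟪S x, y⟫ = ⟪x, S y⟫)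
    (hSpos : ∀ x : H, 0 ≤ ⟪S x, x⟫)
    (hSsq : ∀ x : H, S (S x) = A x)
    -- B is a closed operator whose domain contains D₁
    (hBclosed : IsClosed (B.graph : Set (H × H)))
    (hD₁B : D₁ ≤ B.domain)
    -- (A B φ, B φ) ≤ c₃² ‖A φ‖² for all φ ∈ D₁
    (hABbound : ∀ x : H, ∀ hx : x ∈ D₁,
      ⟪A (B ⟨x, hD₁B hx⟩), B ⟨x, hD₁B hx⟩⟫ ≤ c₃ ^ 2 * ‖A x‖ ^ 2)
    -- R₁ = A(D₁) is dense in H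
    (hdense : Dense (A '' (D₁ : Set H))) :
    ∀ φ : H, ∃ hφ : φ ∈ B.domain, ‖S (B ⟨φ, hφ⟩)‖ ≤ c₃ * ‖A φ‖ := by
  -- coercivity estimate: ν ‖y‖ ≤ ‖A y‖
  have hcoer : ∀ y : H, ν * ‖y‖ ≤ ‖A y‖ := by
    intro y
    rcases eq_or_ne y 0 with rfl | hy
    · simp
    · have h1 : ν * ‖y‖ ^ 2 ≤ ‖A y‖ * ‖y‖ := (hApos y).trans (real_inner_le_norm _ _)
      have hny : 0 < ‖y‖ := norm_pos_iff.mpr hy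
      have := (mul_le_mul_iff_of_pos_right hny).mpr (le_of_eq (rfl : ν * ‖y‖ = ν * ‖y‖))
      nlinarith
  -- ‖S y‖² = ⟪A y, y⟫
  have hSnorm : ∀ y : H, ‖S y‖ ^ 2 = ⟪A y, y⟫ := by
    intro y
    rw [← hSsq y, hSsym (S y) y, real_inner_self_eq_norm_sq]
  -- the bound on D₁ elements: ‖S (B x)‖ ≤ c₃ ‖A x‖ and ν ‖B x‖² ≤ c₃²‖A x‖²
  have hBν : ∀ x : H, ∀ hx : x ∈ D₁, ν * ‖B ⟨x, hD₁B hx⟩‖ ^ 2 ≤ c₃ ^ 2 * ‖A x‖ ^ 2 := by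
    intro x hx
    exact (hApos _).trans (hABbound x hx)
  intro φ
  -- approximate A φ by elements of A '' D₁
  obtain ⟨u, hu_mem, hu_lim⟩ :=
    mem_closure_iff_seq_limit.mp (hdense (A φ))
  choose x hxD₁ hxA using hu_mem
  set v : ℕ → H := fun n => B ⟨x n, hD₁B (hxD₁ n)⟩ with hv
  -- difference estimate for B on D₁
  have hdiff : ∀ m n : ℕ, ν * ‖v m - v n‖ ^ 2 ≤ c₃ ^ 2 * ‖A (x m) - A (x n)‖ ^ 2 := by
    intro m n
    have hmem : x m - x n ∈ D₁ := D₁.sub_mem (hxD₁ m) (hxD₁ n)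
    have key := hBν _ hmem
    have heq : B ⟨x m - x n, hD₁B hmem⟩ = v m - v n := by
      have : (⟨x m - x n, hD₁B hmem⟩ : B.domain)
          = ⟨x m, hD₁B (hxD₁ m)⟩ - ⟨x n, hD₁B (hxD₁ n)⟩ := by
        ext; simp
      rw [this, B.map_sub]
    rw [heq, map_sub] at key
    exact key
  have hν' : (0:ℝ) < Real.sqrt ν := Real.sqrt_pos.mpr hν
  set K : ℝ := c₃ / Real.sqrt ν with hK
  have hKpos : 0 < K := div_pos hc₃ hν'
  have hlip : ∀ m n : ℕ, ‖v m - v n‖ ≤ K * ‖u m - u n‖ := by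
    intro m n
    have := hdiff m n
    rw [hxA m, hxA n] at this
    have h2 : ‖v m - v n‖ ^ 2 ≤ (K * ‖u m - u n‖) ^ 2 := by
      rw [mul_pow, hK, div_pow, Real.sq_sqrt hν.le]
      rw [div_mul_eq_mul_div, le_div_iff₀ hν]
      nlinarith
    nlinarith [h2, norm_nonneg (v m - v n), mul_nonneg hKpos.le (norm_nonneg (u m - u n))]
  -- u is Cauchy, hence v is Cauchy
  have hu_cauchy : CauchySeq u := hu_lim.cauchySeq
  have hv_cauchy : CauchySeq v := by
    rw [Metric.cauchySeq_iff] at hu_cauchy ⊢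
    intro ε hε
    obtain ⟨N, hN⟩ := hu_cauchy (ε / K) (div_pos hε hKpos)
    refine ⟨N, fun m hm n hn => ?_⟩
    have := hlip m n
    rw [dist_eq_norm] at *
    calc ‖v m - v n‖ ≤ K * ‖u m - u n‖ := this
      _ < K * (ε / K) := by
          exact (mul_lt_mul_iff_right₀ hKpos).mpr (by simpa [dist_eq_norm] using hN m hm n hn)
      _ = ε := by field_simp
  obtain ⟨ψ, hψ⟩ := cauchySeq_tendsto_of_complete hv_cauchy
  -- x n → φ
  have hx_lim : Filter.Tendsto x Filter.atTop (nhds φ) := by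
    rw [tendsto_iff_norm_sub_tendsto_zero]
    have hbound : ∀ n, ‖x n - φ‖ ≤ ν⁻¹ * ‖u n - A φ‖ := by
      intro n
      have := hcoer (x n - φ)
      rw [map_sub, hxA n] at this
      rw [le_inv_mul_iff₀ hν]
      linarith
    have h0 : Filter.Tendsto (fun n => ν⁻¹ * ‖u n - A φ‖) Filter.atTop (nhds 0) := by
      have := (tendsto_iff_norm_sub_tendsto_zero.mp hu_lim).const_mul ν⁻¹
      simpa using this
    exact squeeze_zero (fun n => norm_nonneg _) hbound h0
  -- closedness of the graph gives φ ∈ domain and B φ = ψ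
  have hgraph : (φ, ψ) ∈ B.graph := by
    have hmemg : ∀ n, (x n, v n) ∈ (B.graph : Set (H × H)) := fun n => B.mem_graph ⟨x n, hD₁B (hxD₁ n)⟩
    have htend : Filter.Tendsto (fun n => (x n, v n)) Filter.atTop (nhds (φ, ψ)) :=
      hx_lim.prodMk_nhds hψ
    exact hBclosed.mem_of_tendsto htend (Filter.Eventually.of_forall hmemg)
  rw [LinearPMap.mem_graph_iff] at hgraph
  obtain ⟨⟨φ', hφ'⟩, hφeq, hψeq⟩ := hgraph
  simp only at hφeq
  subst hφeq
  refine ⟨hφ', ?_⟩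
  -- S is continuous (Hellinger–Toeplitz)
  have hScont : Continuous S := LinearMap.IsSymmetric.continuous (fun x y => hSsym x y)
  have hSv_lim : Filter.Tendsto (fun n => ‖S (v n)‖) Filter.atTop (nhds ‖S ψ‖) :=
    (hScont.tendsto ψ).comp hψ |>.norm
  have hAu_lim : Filter.Tendsto (fun n => c₃ * ‖u n‖) Filter.atTop (nhds (c₃ * ‖A φ'‖)) :=
    (hu_lim.norm.const_mul c₃)
  have hbnd : ∀ n, ‖S (v n)‖ ≤ c₃ * ‖u n‖ := by
    intro n
    have h1 : ‖S (v n)‖ ^ 2 ≤ (c₃ * ‖u n‖) ^ 2 := by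
      rw [hSnorm]
      calc ⟪A (v n), v n⟫ ≤ c₃ ^ 2 * ‖A (x n)‖ ^ 2 := hABbound _ (hxD₁ n)
        _ = (c₃ * ‖u n‖) ^ 2 := by rw [hxA n, mul_pow]
    nlinarith [norm_nonneg (S (v n)), mul_nonneg hc₃.le (norm_nonneg (u n))]
  have : ‖S ψ‖ ≤ c₃ * ‖A φ'‖ :=
    le_of_tendsto_of_tendsto' hSv_lim hAu_lim hbnd
  rw [hψeq]
  exact this
end

section
/- Let {δ_k}_{k=1}^{n} be a sequence of nonnegative reals and {c_i} nonnegative numbers such that δ_{k+1}² ≤ δ_1² + τ Σ_{i=1}^{k} (δ_i + δ_{i+1}) c_i for all k with τ > 0. Then δ_{k+1} ≤ δ_1 + 2τ Σ_{i=1}^{k} c_i. -/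
theorem stmt9 (δ c : ℕ → ℝ) (τ : ℝ) (hτ : 0 < τ)
    (hδ : ∀ k, 0 ≤ δ k) (hc : ∀ i, 0 ≤ c i)
    (hrec : ∀ k, δ (k + 1) ^ 2 ≤
      δ 1 ^ 2 + τ * ∑ i ∈ Finset.Icc 1 k, (δ i + δ (i + 1)) * c i) :
    ∀ k, δ (k + 1) ≤ δ 1 + 2 * τ * ∑ i ∈ Finset.Icc 1 k, c i := by
  intro k
  obtain ⟨m, hm, hmax⟩ := Finset.exists_max_image (Finset.Icc 1 (k + 1)) δ ⟨1, by simp⟩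
  set S := ∑ i ∈ Finset.Icc 1 k, c i with hS
  have hsum : 0 ≤ S := Finset.sum_nonneg fun i _ => hc i
  have hD : δ (k + 1) ≤ δ m := hmax (k + 1) (by simp)
  have h1D : δ 1 ≤ δ m := hmax 1 (by simp)
  have hDpos : 0 ≤ δ m := hδ m
  have hτS : 0 ≤ τ * S := mul_nonneg hτ.le hsum
  have key : δ m ^ 2 ≤ δ m * (δ 1 + 2 * τ * S) := by
    obtain ⟨h1, h2⟩ := Finset.mem_Icc.mp hm
    obtain ⟨m', rfl⟩ : ∃ m', m = m' + 1 := ⟨m - 1, by omega⟩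
    have hm'k : m' ≤ k := by omega
    calc δ (m' + 1) ^ 2
        ≤ δ 1 ^ 2 + τ * ∑ i ∈ Finset.Icc 1 m', (δ i + δ (i + 1)) * c i := hrec m'
      _ ≤ δ 1 ^ 2 + τ * ∑ i ∈ Finset.Icc 1 m', (2 * δ (m' + 1)) * c i := by
          have hle : ∑ i ∈ Finset.Icc 1 m', (δ i + δ (i + 1)) * c i ≤
              ∑ i ∈ Finset.Icc 1 m', (2 * δ (m' + 1)) * c i := by
            apply Finset.sum_le_sum
            intro i hi
            obtain ⟨hi1, hi2⟩ := Finset.mem_Icc.mp hi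
            have ha := hmax i (Finset.mem_Icc.mpr ⟨hi1, by omega⟩)
            have hb := hmax (i + 1) (Finset.mem_Icc.mpr ⟨by omega, by omega⟩)
            have := hc i
            nlinarith
          nlinarith
      _ ≤ δ 1 ^ 2 + τ * ∑ i ∈ Finset.Icc 1 k, (2 * δ (m' + 1)) * c i := by
          have hle : ∑ i ∈ Finset.Icc 1 m', (2 * δ (m' + 1)) * c i ≤
              ∑ i ∈ Finset.Icc 1 k, (2 * δ (m' + 1)) * c i :=
            Finset.sum_le_sum_of_subset_of_nonneg
              (Finset.Icc_subset_Icc_right hm'k)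
              (fun i _ _ => by
                have := hc i
                have := hδ (m' + 1)
                positivity)
          nlinarith
      _ = δ 1 ^ 2 + 2 * τ * δ (m' + 1) * S := by
          rw [hS, ← Finset.mul_sum]; ring
      _ ≤ δ (m' + 1) * (δ 1 + 2 * τ * S) := by
          nlinarith [mul_le_mul_of_nonneg_right h1D (hδ 1)]
  have hDle : δ m ≤ δ 1 + 2 * τ * S := by
    rcases hDpos.lt_or_eq with h | h
    · nlinarith
    · nlinarith [hδ 1]
  linarith
end

section
/- With notation as in the coefficient recursion for shifted Legendre expansions: if â_m = (ℓ/2) A_m (A_{m−1} ĉ_{m−1} − A_{m+1} ĉ_{m+1}) with A_m = (2m+1)^{−1/2} and Σ_m ĉ_m² ≤ ‖w″‖², then the tail satisfies Σ_{m=N+1}^∞ â_m² ≤ ℓ² / ((2N+1)(2N+5)) · ‖w″‖². -/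
lemma stmt17_key (ℓ p q r c1 c2 : ℝ) (hp : 0 < p) (hq : 0 < q) (hr : 0 < r) :
    (ℓ / 2 * (1 / Real.sqrt q) * ((1 / Real.sqrt p) * c1 - (1 / Real.sqrt r) * c2)) ^ 2
      ≤ ℓ ^ 2 / 2 * (c1 ^ 2 / (p * q) + c2 ^ 2 / (q * r)) := by
  have hp2 : (Real.sqrt p) ^ 2 = p := Real.sq_sqrt hp.le
  have hq2 : (Real.sqrt q) ^ 2 = q := Real.sq_sqrt hq.le
  have hr2 : (Real.sqrt r) ^ 2 = r := Real.sq_sqrt hr.le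
  have hps : 0 < Real.sqrt p := Real.sqrt_pos.mpr hp
  have hqs : 0 < Real.sqrt q := Real.sqrt_pos.mpr hq
  have hrs : 0 < Real.sqrt r := Real.sqrt_pos.mpr hr
  have e1 : ((1 / Real.sqrt p) * c1) ^ 2 = c1 ^ 2 / p := by
    rw [mul_pow, div_pow, one_pow, hp2]; ring
  have e2 : ((1 / Real.sqrt r) * c2) ^ 2 = c2 ^ 2 / r := by
    rw [mul_pow, div_pow, one_pow, hr2]; ring
  have h2 : ((1 / Real.sqrt p) * c1 - (1 / Real.sqrt r) * c2) ^ 2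
      ≤ 2 * (c1 ^ 2 / p) + 2 * (c2 ^ 2 / r) := by
    nlinarith [sq_nonneg ((1 / Real.sqrt p) * c1 + (1 / Real.sqrt r) * c2), e1, e2]
  calc (ℓ / 2 * (1 / Real.sqrt q) * ((1 / Real.sqrt p) * c1 - (1 / Real.sqrt r) * c2)) ^ 2
      = ℓ ^ 2 / 4 * (1 / q) * ((1 / Real.sqrt p) * c1 - (1 / Real.sqrt r) * c2) ^ 2 := by
        rw [mul_pow, mul_pow, div_pow, div_pow, one_pow, hq2]; ring
    _ ≤ ℓ ^ 2 / 4 * (1 / q) * (2 * (c1 ^ 2 / p) + 2 * (c2 ^ 2 / r)) := by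
        apply mul_le_mul_of_nonneg_left h2; positivity
    _ = ℓ ^ 2 / 2 * (c1 ^ 2 / (p * q) + c2 ^ 2 / (q * r)) := by
        field_simp; ring

set_option maxHeartbeats 1000000 in
theorem stmt17 (ℓ M : ℝ) (hℓ : 0 < ℓ) (hM : 0 ≤ M) (a c : ℕ → ℝ) (N : ℕ) (hN : 1 ≤ N)
    (hrel : ∀ m : ℕ, a (m + 1) =
      (ℓ / 2) * (1 / Real.sqrt (2 * (m + 1 : ℝ) + 1)) *
        ((1 / Real.sqrt (2 * (m : ℝ) + 1)) * c m -
          (1 / Real.sqrt (2 * (m + 2 : ℝ) + 1)) * c (m + 2)))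
    (hsum : Summable (fun m => c m ^ 2)) (hbound : ∑' m, c m ^ 2 ≤ M) :
    ∑' m : ℕ, a (m + (N + 1)) ^ 2 ≤
      ℓ ^ 2 / ((2 * (N : ℝ) + 1) * (2 * (N : ℝ) + 5)) * M := by
  have hn : (1 : ℝ) ≤ (N : ℝ) := by exact_mod_cast hN
  have h1 : (0:ℝ) < 2 * (N:ℝ) + 1 := by linarith
  have h3 : (0:ℝ) < 2 * (N:ℝ) + 3 := by linarith
  have h5 : (0:ℝ) < 2 * (N:ℝ) + 5 := by linarith
  set g : ℕ → ℝ := fun m => ℓ ^ 2 / 2 *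
    (c (m + N) ^ 2 / ((2 * (N:ℝ) + 1) * (2 * (N:ℝ) + 3)) +
     c (m + (N + 2)) ^ 2 / ((2 * (N:ℝ) + 3) * (2 * (N:ℝ) + 5))) with hg
  have hs1 : Summable (fun m => c (m + N) ^ 2) := (summable_nat_add_iff N).mpr hsum
  have hs2 : Summable (fun m => c (m + (N + 2)) ^ 2) := (summable_nat_add_iff (N+2)).mpr hsum
  have hsg : Summable g := by
    apply Summable.mul_left
    exact (hs1.div_const _).add (hs2.div_const _)
  have hle : ∀ m, a (m + (N + 1)) ^ 2 ≤ g m := by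
    intro m
    have hidx : m + (N + 1) = (m + N) + 1 := by omega
    rw [hidx, hrel (m + N)]
    have hcast : ((m + N : ℕ) : ℝ) = (m : ℝ) + (N : ℝ) := by push_cast; ring
    rw [hcast]
    have hm0 : (0:ℝ) ≤ (m : ℝ) := Nat.cast_nonneg m
    have hp : (0:ℝ) < 2 * ((m:ℝ) + (N:ℝ)) + 1 := by linarith
    have hq : (0:ℝ) < 2 * ((m:ℝ) + (N:ℝ) + 1) + 1 := by linarith
    have hr : (0:ℝ) < 2 * ((m:ℝ) + (N:ℝ) + 2) + 1 := by linarith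
    calc (ℓ / 2 * (1 / Real.sqrt (2 * ((m:ℝ) + (N:ℝ) + 1) + 1)) *
          ((1 / Real.sqrt (2 * ((m:ℝ) + (N:ℝ)) + 1)) * c (m + N) -
           (1 / Real.sqrt (2 * ((m:ℝ) + (N:ℝ) + 2) + 1)) * c (m + N + 2))) ^ 2
        ≤ ℓ ^ 2 / 2 *
            (c (m + N) ^ 2 / ((2 * ((m:ℝ) + (N:ℝ)) + 1) * (2 * ((m:ℝ) + (N:ℝ) + 1) + 1)) +
             c (m + N + 2) ^ 2 /
              ((2 * ((m:ℝ) + (N:ℝ) + 1) + 1) * (2 * ((m:ℝ) + (N:ℝ) + 2) + 1))) :=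
          stmt17_key ℓ _ _ _ _ _ hp hq hr
      _ ≤ g m := by
          have hidx2 : m + N + 2 = m + (N + 2) := by omega
          simp only [hg]; rw [← hidx2]
          have hd1 : (2 * (N:ℝ) + 1) * (2 * (N:ℝ) + 3) ≤
              (2 * ((m:ℝ) + (N:ℝ)) + 1) * (2 * ((m:ℝ) + (N:ℝ) + 1) + 1) := by nlinarith
          have hd2 : (2 * (N:ℝ) + 3) * (2 * (N:ℝ) + 5) ≤
              (2 * ((m:ℝ) + (N:ℝ) + 1) + 1) * (2 * ((m:ℝ) + (N:ℝ) + 2) + 1) := by nlinarith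
          gcongr
  have hsa : Summable (fun m => a (m + (N + 1)) ^ 2) :=
    Summable.of_nonneg_of_le (fun m => sq_nonneg _) hle hsg
  have htail : ∀ K : ℕ, ∑' m, c (m + K) ^ 2 ≤ M := by
    intro K
    have hEq := Summable.sum_add_tsum_nat_add K hsum
    have hpos : 0 ≤ ∑ i ∈ Finset.range K, c i ^ 2 :=
      Finset.sum_nonneg fun i _ => sq_nonneg _
    linarith
  calc ∑' m : ℕ, a (m + (N + 1)) ^ 2 ≤ ∑' m, g m := Summable.tsum_le_tsum hle hsa hsg
    _ = ℓ ^ 2 / 2 * ((∑' m, c (m + N) ^ 2) / ((2 * (N:ℝ) + 1) * (2 * (N:ℝ) + 3)) +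
          (∑' m, c (m + (N + 2)) ^ 2) / ((2 * (N:ℝ) + 3) * (2 * (N:ℝ) + 5))) := by
        rw [hg, tsum_mul_left, Summable.tsum_add (hs1.div_const _) (hs2.div_const _),
          tsum_div_const, tsum_div_const]
    _ ≤ ℓ ^ 2 / 2 * (M / ((2 * (N:ℝ) + 1) * (2 * (N:ℝ) + 3)) +
          M / ((2 * (N:ℝ) + 3) * (2 * (N:ℝ) + 5))) := by
        gcongr
        · exact htail N
        · exact htail (N + 2)
    _ = ℓ ^ 2 / ((2 * (N:ℝ) + 1) * (2 * (N:ℝ) + 5)) * M := by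
        field_simp; ring
end

section
/- Consider the two-point boundary value problem (p(x)w′)′ − q(x)w = f on (0,ℓ) with w(0) = w(ℓ) = 0, where p ∈ C¹([0,ℓ]) with p ≥ p₀ > 0, q continuous with q ≥ q₀ > 0, and f continuous. Then the classical solution w satisfies ‖w′‖ ≤ (ℓ/(π p₀)) ‖f‖ and ‖w‖ ≤ (ℓ²/(π² p₀)) ‖f‖, where ‖·‖ denotes the L²(0,ℓ) norm. -/
open Filter Set Real intervalIntegral MeasureTheory

lemma tendsto_cot_aux (c d a : ℝ) (hc : c ≠ 0) (w : ℝ → ℝ)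
    (hw : HasDerivAt w d a) (h0 : w a = 0) :
    Tendsto (fun x => w x ^ 2 * (Real.cos (c * (x - a)) / Real.sin (c * (x - a))))
      (nhdsWithin a {a}ᶜ) (nhds 0) := by
  have hslope : Tendsto (slope w a) (nhdsWithin a {a}ᶜ) (nhds d) :=
    hasDerivAt_iff_tendsto_slope.mp hw
  have hsinlim : Tendsto (fun y : ℝ => Real.sin y / y) (nhdsWithin 0 {(0:ℝ)}ᶜ) (nhds 1) := by
    have := hasDerivAt_iff_tendsto_slope.mp (Real.hasDerivAt_sin 0)
    simp only [Real.cos_zero] at this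
    refine this.congr fun y => ?_
    simp [slope_def_field]
  have hsin : Tendsto (fun y : ℝ => y / Real.sin y) (nhdsWithin 0 {(0:ℝ)}ᶜ) (nhds 1) := by
    have := hsinlim.inv₀ one_ne_zero
    simp only [inv_one] at this
    refine this.congr ?_
    intro y; rw [inv_div]
  have hmap : Tendsto (fun x => c * (x - a)) (nhdsWithin a {a}ᶜ) (nhdsWithin 0 {(0:ℝ)}ᶜ) := by
    rw [tendsto_nhdsWithin_iff]
    constructor
    · have : Tendsto (fun x => c * (x - a)) (nhds a) (nhds (c * (a - a))) :=
        (tendsto_id.sub_const a).const_mul c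
      simpa using this.mono_left nhdsWithin_le_nhds
    · filter_upwards [self_mem_nhdsWithin] with x hx
      simp only [mem_compl_iff, mem_singleton_iff] at hx ⊢
      intro h
      rcases mul_eq_zero.mp h with h | h
      · exact hc h
      · exact hx (by linarith [sub_eq_zero.mp h])
  have hfac2 : Tendsto (fun x => (c * (x - a)) / Real.sin (c * (x - a)))
      (nhdsWithin a {a}ᶜ) (nhds 1) := hsin.comp hmap
  have hfac3 : Tendsto (fun x => Real.cos (c * (x - a))) (nhdsWithin a {a}ᶜ) (nhds 1) := by
    have : Tendsto (fun x => c * (x - a)) (nhdsWithin a {a}ᶜ) (nhds 0) :=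
      hmap.mono_right nhdsWithin_le_nhds
    simpa [Function.comp_def] using (Real.continuous_cos.tendsto 0).comp this
  have hfac4 : Tendsto (fun x => (x - a) / c) (nhdsWithin a {a}ᶜ) (nhds 0) := by
    have : Tendsto (fun x : ℝ => (x - a) / c) (nhds a) (nhds ((a - a) / c)) :=
      (tendsto_id.sub_const a).div_const c
    simpa using this.mono_left nhdsWithin_le_nhds
  have hprod := ((hslope.pow 2).mul hfac2).mul hfac3 |>.mul hfac4
  simp only [mul_zero, one_pow, mul_one] at hprod
  refine hprod.congr' ?_ |>.mono_right (by simp)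
  filter_upwards [self_mem_nhdsWithin] with x hx
  simp only [mem_compl_iff, mem_singleton_iff] at hx
  have hxa : x - a ≠ 0 := sub_ne_zero.mpr hx
  rw [slope_def_field, h0, sub_zero]
  by_cases hs : Real.sin (c * (x - a)) = 0
  · simp [hs, div_zero]
  · field_simp


lemma steklov (ℓ : ℝ) (hℓ : 0 < ℓ) (w w' : ℝ → ℝ) (hw : ∀ x, HasDerivAt w (w' x) x)
    (hw'c : Continuous w') (h0 : w 0 = 0) (hl : w ℓ = 0) :
    (Real.pi / ℓ) ^ 2 * ∫ x in (0:ℝ)..ℓ, (w x) ^ 2 ≤ ∫ x in (0:ℝ)..ℓ, (w' x) ^ 2 := by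
  set c := Real.pi / ℓ with hcdef
  have hc : 0 < c := div_pos Real.pi_pos hℓ
  have hwc : Continuous w := by
    rw [continuous_iff_continuousAt]; exact fun x => (hw x).continuousAt
  set h : ℝ → ℝ := fun x => w' x ^ 2 - c ^ 2 * w x ^ 2 with hhdef
  have hhc : Continuous h := (hw'c.pow 2).sub (continuous_const.mul (hwc.pow 2))
  set F : ℝ → ℝ := fun x => c * (w x ^ 2 * (Real.cos (c * x) / Real.sin (c * x))) with hFdef
  set g : ℝ → ℝ := fun x => w' x - c * w x * (Real.cos (c * x) / Real.sin (c * x)) with hgdef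
  -- sin (c*x) positive on Ioo 0 ℓ
  have hsinpos : ∀ x ∈ Ioo (0:ℝ) ℓ, 0 < Real.sin (c * x) := by
    intro x hx
    apply Real.sin_pos_of_pos_of_lt_pi (mul_pos hc hx.1)
    calc c * x < c * ℓ := by exact (mul_lt_mul_iff_right₀ hc).mpr hx.2
    _ = Real.pi := by rw [hcdef, div_mul_cancel₀ _ (ne_of_gt hℓ)]
  -- Step A : derivative of F on Ioo 0 ℓ
  have hFderiv : ∀ x ∈ Ioo (0:ℝ) ℓ, HasDerivAt F (h x - g x ^ 2) x := by
    intro x hx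
    have hs := hsinpos x hx
    have hsne : Real.sin (c * x) ≠ 0 := ne_of_gt hs
    have hid : HasDerivAt (fun y : ℝ => c * y) c x := by
      simpa using (hasDerivAt_id x).const_mul c
    have hcos : HasDerivAt (fun y : ℝ => Real.cos (c * y)) (-Real.sin (c * x) * c) x :=
      (Real.hasDerivAt_cos (c * x)).comp x hid
    have hsin : HasDerivAt (fun y : ℝ => Real.sin (c * y)) (Real.cos (c * x) * c) x :=
      (Real.hasDerivAt_sin (c * x)).comp x hid
    have hdiv : HasDerivAt (fun y : ℝ => Real.cos (c * y) / Real.sin (c * y))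
        ((-Real.sin (c * x) * c * Real.sin (c * x) -
          Real.cos (c * x) * (Real.cos (c * x) * c)) / Real.sin (c * x) ^ 2) x :=
      hcos.div hsin hsne
    have hw2 : HasDerivAt (fun y : ℝ => w y ^ 2) (2 * w x ^ 1 * w' x) x := (hw x).pow 2
    have hF := ((hw2.mul hdiv).const_mul c)
    refine hF.congr_deriv ?_
    have hsc : Real.sin (c * x) ^ 2 + Real.cos (c * x) ^ 2 = 1 := Real.sin_sq_add_cos_sq _
    simp only [hhdef, hgdef]
    field_simp
    ring_nf
  -- Step B
  have hstepB : ∀ ε ∈ Ioo (0:ℝ) (ℓ/2), F (ℓ - ε) - F ε ≤ ∫ x in ε..(ℓ - ε), h x := by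
    intro ε hε
    have hεl : ε ≤ ℓ - ε := by linarith [hε.1, hε.2]
    have hsub : Icc ε (ℓ - ε) ⊆ Ioo (0:ℝ) ℓ := by
      intro x hx
      exact ⟨lt_of_lt_of_le hε.1 hx.1, by linarith [hx.2, hε.1]⟩
    have huIcc : uIcc ε (ℓ - ε) = Icc ε (ℓ - ε) := uIcc_of_le hεl
    have hgcont : ContinuousOn g (Icc ε (ℓ - ε)) := by
      apply hw'c.continuousOn.sub
      apply ContinuousOn.mul (continuous_const.mul hwc).continuousOn
      exact ((Real.continuous_cos.comp (continuous_const.mul continuous_id)).continuousOn.div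
        (Real.continuous_sin.comp (continuous_const.mul continuous_id)).continuousOn
        fun x hx => ne_of_gt (hsinpos x (hsub hx)))
    have hg2int : IntervalIntegrable (fun x => g x ^ 2) volume ε (ℓ - ε) :=
      (hgcont.pow 2).intervalIntegrable_of_Icc hεl
    have hhint : IntervalIntegrable h volume ε (ℓ - ε) := hhc.intervalIntegrable _ _
    have hftc : ∫ x in ε..(ℓ - ε), (h x - g x ^ 2) = F (ℓ - ε) - F ε := by
      apply integral_eq_sub_of_hasDerivAt
      · intro x hx
        rw [huIcc] at hx
        exact hFderiv x (hsub hx)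
      · exact hhint.sub hg2int
    have hsplit : ∫ x in ε..(ℓ - ε), (h x - g x ^ 2)
        = (∫ x in ε..(ℓ - ε), h x) - ∫ x in ε..(ℓ - ε), g x ^ 2 :=
      integral_sub hhint hg2int
    have hg2nonneg : 0 ≤ ∫ x in ε..(ℓ - ε), g x ^ 2 :=
      integral_nonneg hεl fun x _ => sq_nonneg _
    linarith [hftc, hsplit, hg2nonneg]
  -- Step C : take ε → 0⁺
  have hPcont : Continuous fun t => ∫ x in (0:ℝ)..t, h x :=
    intervalIntegral.continuous_primitive (fun a b => hhc.intervalIntegrable a b) 0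
  set P : ℝ → ℝ := fun t => ∫ x in (0:ℝ)..t, h x with hPdef
  have hPsub : ∀ ε ∈ Ioo (0:ℝ) (ℓ/2), ∫ x in ε..(ℓ - ε), h x = P (ℓ - ε) - P ε := by
    intro ε hε
    rw [hPdef]
    rw [← intervalIntegral.integral_interval_sub_left (hhc.intervalIntegrable 0 (ℓ - ε))
      (hhc.intervalIntegrable 0 ε)]
  -- limits of F at the endpoints
  have hF0 : Tendsto F (nhdsWithin 0 (Ioi 0)) (nhds 0) := by
    have := (tendsto_cot_aux c (w' 0) 0 (ne_of_gt hc) w (hw 0) h0).const_mul c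
    rw [mul_zero] at this
    refine (this.mono_left (nhdsWithin_mono _ ?_)).congr fun x => by simp [hFdef]
    intro x hx
    simp only [mem_compl_iff, mem_singleton_iff]
    exact ne_of_gt hx
  have hFl : Tendsto (fun x => F x) (nhdsWithin ℓ {ℓ}ᶜ) (nhds 0) := by
    have haux := (tendsto_cot_aux c (w' ℓ) ℓ (ne_of_gt hc) w (hw ℓ) hl).const_mul c
    rw [mul_zero] at haux
    refine haux.congr fun x => ?_
    have hcl : c * ℓ = Real.pi := by rw [hcdef, div_mul_cancel₀ _ (ne_of_gt hℓ)]
    have harg : c * x = c * (x - ℓ) + Real.pi := by linear_combination hcl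
    have hco : Real.cos (c * x) = -Real.cos (c * (x - ℓ)) := by
      rw [harg, Real.cos_add, Real.cos_pi, Real.sin_pi]; ring
    have hsi : Real.sin (c * x) = -Real.sin (c * (x - ℓ)) := by
      rw [harg, Real.sin_add, Real.cos_pi, Real.sin_pi]; ring
    simp only [hFdef]
    rw [hco, hsi, neg_div_neg_eq]
  have hev : Ioo (0:ℝ) (ℓ/2) ∈ nhdsWithin (0:ℝ) (Ioi 0) :=
    Ioo_mem_nhdsGT_of_mem ⟨le_refl 0, half_pos hℓ⟩
  have t1 : Tendsto (fun ε : ℝ => ℓ - ε) (nhdsWithin 0 (Ioi 0)) (nhdsWithin ℓ {ℓ}ᶜ) := by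
    rw [tendsto_nhdsWithin_iff]
    constructor
    · have : Tendsto (fun ε : ℝ => ℓ - ε) (nhds 0) (nhds (ℓ - 0)) :=
        tendsto_const_nhds.sub tendsto_id
      simpa using this.mono_left nhdsWithin_le_nhds
    · filter_upwards [self_mem_nhdsWithin] with ε hε
      simp only [mem_compl_iff, mem_singleton_iff]
      intro hcontra
      have : ε = 0 := by linarith [sub_eq_self.mp hcontra]
      exact absurd this (ne_of_gt (mem_Ioi.mp hε))
  have hLHS : Tendsto (fun ε => F (ℓ - ε) - F ε) (nhdsWithin 0 (Ioi 0)) (nhds 0) := by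
    have := (hFl.comp t1).sub hF0
    simpa using this
  have hRHS : Tendsto (fun ε => P (ℓ - ε) - P ε) (nhdsWithin 0 (Ioi 0)) (nhds (P ℓ)) := by
    have h1 : Tendsto (fun ε : ℝ => P (ℓ - ε)) (nhdsWithin 0 (Ioi 0)) (nhds (P ℓ)) := by
      have : Tendsto (fun ε : ℝ => ℓ - ε) (nhds 0) (nhds (ℓ - 0)) :=
        tendsto_const_nhds.sub tendsto_id
      rw [sub_zero] at this
      exact (hPcont.tendsto ℓ).comp (this.mono_left nhdsWithin_le_nhds)
    have h2 : Tendsto P (nhdsWithin 0 (Ioi 0)) (nhds (P 0)) :=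
      (hPcont.tendsto 0).mono_left nhdsWithin_le_nhds
    have hP0 : P 0 = 0 := integral_same
    have := h1.sub h2
    rw [hP0, sub_zero] at this
    exact this
  have hfinal : (0:ℝ) ≤ P ℓ := by
    refine le_of_tendsto_of_tendsto hLHS hRHS ?_
    filter_upwards [hev] with ε hε
    calc F (ℓ - ε) - F ε ≤ ∫ x in ε..(ℓ - ε), h x := hstepB ε hε
    _ = P (ℓ - ε) - P ε := hPsub ε hε
  have hPl : P ℓ = (∫ x in (0:ℝ)..ℓ, w' x ^ 2) - c ^ 2 * ∫ x in (0:ℝ)..ℓ, w x ^ 2 := by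
    rw [hPdef]
    simp only [hhdef]
    rw [integral_sub (f := fun x => w' x ^ 2) (g := fun x => c ^ 2 * w x ^ 2) ((hw'c.pow 2).intervalIntegrable 0 ℓ)
      ((continuous_const.mul (hwc.pow 2)).intervalIntegrable 0 ℓ), intervalIntegral.integral_const_mul]
  rw [hPl] at hfinal
  linarith

open intervalIntegral Set

lemma cs_int (a b : ℝ) (hab : a ≤ b) (f g : ℝ → ℝ) (hf : Continuous f) (hg : Continuous g) :
    (∫ x in a..b, f x * g x) ^ 2 ≤ (∫ x in a..b, f x ^ 2) * (∫ x in a..b, g x ^ 2) := by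
  have key : ∀ t : ℝ, 0 ≤ (∫ x in a..b, g x ^ 2) * (t * t) +
      (2 * ∫ x in a..b, f x * g x) * t + (∫ x in a..b, f x ^ 2) := by
    intro t
    have h1 : IntervalIntegrable (fun x => f x ^ 2) MeasureTheory.volume a b :=
      (hf.pow 2).intervalIntegrable a b
    have h2 : IntervalIntegrable (fun x => g x ^ 2) MeasureTheory.volume a b :=
      (hg.pow 2).intervalIntegrable a b
    have h3 : IntervalIntegrable (fun x => f x * g x) MeasureTheory.volume a b :=
      (hf.mul hg).intervalIntegrable a b
    have hexp : (∫ x in a..b, (f x + t * g x) ^ 2) =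
        (∫ x in a..b, g x ^ 2) * (t * t) + (2 * ∫ x in a..b, f x * g x) * t +
          (∫ x in a..b, f x ^ 2) := by
      have : (fun x => (f x + t * g x) ^ 2) =
          fun x => (t * t) * g x ^ 2 + (2 * t) * (f x * g x) + f x ^ 2 := by
        funext x; ring
      rw [this, integral_add ((h2.const_mul _).add (h3.const_mul _)) h1,
        integral_add (h2.const_mul _) (h3.const_mul _),
        intervalIntegral.integral_const_mul, intervalIntegral.integral_const_mul]
      ring
    rw [← hexp]
    exact integral_nonneg hab fun x _ => sq_nonneg _
  have hd := discrim_le_zero key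
  rw [discrim] at hd
  nlinarith [hd]


theorem stmt18 (ℓ p₀ q₀ : ℝ) (hℓ : 0 < ℓ) (hp₀ : 0 < p₀) (hq₀ : 0 < q₀)
    (p p' q f w w' w'' : ℝ → ℝ)
    (hp : ∀ x, HasDerivAt p (p' x) x)
    (hw : ∀ x, HasDerivAt w (w' x) x) (hw' : ∀ x, HasDerivAt w' (w'' x) x)
    (hp'c : Continuous p') (hqc : Continuous q) (hfc : Continuous f)
    (hw''c : Continuous w'')
    (hpl : ∀ x ∈ Set.Icc (0 : ℝ) ℓ, p₀ ≤ p x)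
    (hql : ∀ x ∈ Set.Icc (0 : ℝ) ℓ, q₀ ≤ q x)
    (hode : ∀ x ∈ Set.Icc (0 : ℝ) ℓ, p' x * w' x + p x * w'' x - q x * w x = f x)
    (h0 : w 0 = 0) (hl : w ℓ = 0) :
    Real.sqrt (∫ x in (0 : ℝ)..ℓ, (w' x) ^ 2) ≤
        ℓ / (Real.pi * p₀) * Real.sqrt (∫ x in (0 : ℝ)..ℓ, (f x) ^ 2) ∧
      Real.sqrt (∫ x in (0 : ℝ)..ℓ, (w x) ^ 2) ≤
        ℓ ^ 2 / (Real.pi ^ 2 * p₀) * Real.sqrt (∫ x in (0 : ℝ)..ℓ, (f x) ^ 2) := by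
  have hπ := Real.pi_pos
  have hwc : Continuous w := by
    rw [continuous_iff_continuousAt]; exact fun x => (hw x).continuousAt
  have hw'cont : Continuous w' := by
    rw [continuous_iff_continuousAt]; exact fun x => (hw' x).continuousAt
  have hpc : Continuous p := by
    rw [continuous_iff_continuousAt]; exact fun x => (hp x).continuousAt
  -- energy identity
  have hibp := intervalIntegral.integral_mul_deriv_eq_deriv_mul
    (u := w) (v := fun x => p x * w' x) (u' := w')
    (v' := fun x => p' x * w' x + p x * w'' x) (a := (0:ℝ)) (b := ℓ)
    (fun x _ => hw x) (fun x _ => (hp x).mul (hw' x))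
    (hw'cont.intervalIntegrable 0 ℓ)
    (((hp'c.mul hw'cont).add (hpc.mul hw''c)).intervalIntegrable 0 ℓ)
  rw [h0, hl, zero_mul, zero_mul, sub_zero, zero_sub] at hibp
  have hode2 : ∫ x in (0:ℝ)..ℓ, w x * (p' x * w' x + p x * w'' x)
      = ∫ x in (0:ℝ)..ℓ, (q x * w x ^ 2 + f x * w x) := by
    apply intervalIntegral.integral_congr
    intro x hx
    rw [uIcc_of_le hℓ.le] at hx
    have hx2 := hode x hx
    linear_combination (w x) * hx2
  have hpw : (∫ x in (0:ℝ)..ℓ, w' x * (p x * w' x)) = ∫ x in (0:ℝ)..ℓ, p x * w' x ^ 2 := by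
    apply intervalIntegral.integral_congr
    intro x _; ring
  have hsplit : (∫ x in (0:ℝ)..ℓ, (q x * w x ^ 2 + f x * w x))
      = (∫ x in (0:ℝ)..ℓ, q x * w x ^ 2) + ∫ x in (0:ℝ)..ℓ, f x * w x :=
    intervalIntegral.integral_add ((hqc.mul (hwc.pow 2)).intervalIntegrable 0 ℓ)
      ((hfc.mul hwc).intervalIntegrable 0 ℓ)
  -- energy : ∫ p w'^2 + ∫ q w^2 + ∫ f w = 0
  have henergy : (∫ x in (0:ℝ)..ℓ, p x * w' x ^ 2) + (∫ x in (0:ℝ)..ℓ, q x * w x ^ 2)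
      + (∫ x in (0:ℝ)..ℓ, f x * w x) = 0 := by
    rw [hode2, hsplit] at hibp
    rw [hpw] at hibp
    linarith [hibp]
  set A := ∫ x in (0:ℝ)..ℓ, w' x ^ 2 with hAdef
  set B := ∫ x in (0:ℝ)..ℓ, w x ^ 2 with hBdef
  set Φ := Real.sqrt (∫ x in (0:ℝ)..ℓ, f x ^ 2) with hΦdef
  have hA0 : 0 ≤ A := intervalIntegral.integral_nonneg hℓ.le fun x _ => sq_nonneg _
  have hB0 : 0 ≤ B := intervalIntegral.integral_nonneg hℓ.le fun x _ => sq_nonneg _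
  have hΦ0 : 0 ≤ Φ := Real.sqrt_nonneg _
  have hpA : p₀ * A ≤ ∫ x in (0:ℝ)..ℓ, p x * w' x ^ 2 := by
    rw [hAdef, ← intervalIntegral.integral_const_mul]
    apply intervalIntegral.integral_mono_on hℓ.le
      ((continuous_const.mul (hw'cont.pow 2)).intervalIntegrable 0 ℓ)
      ((hpc.mul (hw'cont.pow 2)).intervalIntegrable 0 ℓ)
    intro x hx
    exact mul_le_mul_of_nonneg_right (hpl x hx) (sq_nonneg _)
  have hqB : 0 ≤ ∫ x in (0:ℝ)..ℓ, q x * w x ^ 2 := by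
    apply intervalIntegral.integral_nonneg hℓ.le
    intro x hx
    exact mul_nonneg (le_trans hq₀.le (hql x hx)) (sq_nonneg _)
  -- Cauchy-Schwarz
  have hCS : |∫ x in (0:ℝ)..ℓ, f x * w x| ≤ Φ * Real.sqrt B := by
    have h1 := cs_int 0 ℓ hℓ.le f w hfc hwc
    have h2 : |∫ x in (0:ℝ)..ℓ, f x * w x|
        = Real.sqrt ((∫ x in (0:ℝ)..ℓ, f x * w x) ^ 2) := (Real.sqrt_sq_eq_abs _).symm
    rw [h2, hΦdef, ← Real.sqrt_mul (intervalIntegral.integral_nonneg hℓ.le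
      fun x _ => sq_nonneg _)]
    exact Real.sqrt_le_sqrt h1
  -- combining : p₀ A ≤ Φ √B
  have hkey : p₀ * A ≤ Φ * Real.sqrt B := by
    have h3 : (∫ x in (0:ℝ)..ℓ, p x * w' x ^ 2) ≤ -∫ x in (0:ℝ)..ℓ, f x * w x := by
      linarith [henergy, hqB]
    have h4 : -(∫ x in (0:ℝ)..ℓ, f x * w x) ≤ |∫ x in (0:ℝ)..ℓ, f x * w x| :=
      neg_le_abs _
    linarith [hpA, hCS]
  -- Steklov
  have hstek := steklov ℓ hℓ w w' hw hw'cont h0 hl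
  have hsB : Real.sqrt B ≤ ℓ / Real.pi * Real.sqrt A := by
    have hle : B ≤ (ℓ / Real.pi) ^ 2 * A := by
      rw [← hAdef, ← hBdef] at hstek
      have e : (ℓ / Real.pi) ^ 2 * ((Real.pi / ℓ) ^ 2) = 1 := by
        field_simp
      calc B = (ℓ / Real.pi) ^ 2 * ((Real.pi / ℓ) ^ 2 * B) := by
            rw [← mul_assoc, e, one_mul]
      _ ≤ (ℓ / Real.pi) ^ 2 * A := mul_le_mul_of_nonneg_left hstek (by positivity)
    calc Real.sqrt B ≤ Real.sqrt ((ℓ / Real.pi) ^ 2 * A) := Real.sqrt_le_sqrt hle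
    _ = (ℓ / Real.pi) * Real.sqrt A := by
        rw [Real.sqrt_mul (sq_nonneg _), Real.sqrt_sq (by positivity)]
  -- final algebra
  have hchain : p₀ * Real.sqrt A * Real.sqrt A ≤ ℓ / Real.pi * Φ * Real.sqrt A := by
    have hAs : Real.sqrt A * Real.sqrt A = A := Real.mul_self_sqrt hA0
    calc p₀ * Real.sqrt A * Real.sqrt A = p₀ * A := by rw [mul_assoc, hAs]
    _ ≤ Φ * Real.sqrt B := hkey
    _ ≤ Φ * (ℓ / Real.pi * Real.sqrt A) := by
        exact mul_le_mul_of_nonneg_left hsB hΦ0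
    _ = ℓ / Real.pi * Φ * Real.sqrt A := by ring
  have goal1 : Real.sqrt A ≤ ℓ / (Real.pi * p₀) * Φ := by
    rcases eq_or_lt_of_le (Real.sqrt_nonneg A) with hz | hpos
    · rw [← hz]; positivity
    · have hc := le_of_mul_le_mul_right (by linarith [hchain] : p₀ * Real.sqrt A * Real.sqrt A ≤ (ℓ / Real.pi * Φ) * Real.sqrt A) hpos
      rw [div_mul_eq_mul_div, le_div_iff₀ (by positivity : (0:ℝ) < Real.pi * p₀)]
      rw [div_mul_eq_mul_div, le_div_iff₀ hπ] at hc
      nlinarith [hc]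
  refine ⟨goal1, ?_⟩
  calc Real.sqrt B ≤ ℓ / Real.pi * Real.sqrt A := hsB
  _ ≤ ℓ / Real.pi * (ℓ / (Real.pi * p₀) * Φ) :=
      mul_le_mul_of_nonneg_left goal1 (by positivity)
  _ = ℓ ^ 2 / (Real.pi ^ 2 * p₀) * Φ := by field_simp
end

section
/- Under the hypotheses of the preceding Sturm–Liouville problem, the second derivative of the solution satisfies ‖w″‖ ≤ b̂₁ ‖f‖ in L²(0,ℓ), where b̂₁ = p₀^{−2} ( (ℓ/π) max|p′| + (ℓ²/π²) max q + p₀ ). -/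
open MeasureTheory Real

lemma my_expand {a b : ℝ} {g h : ℝ → ℝ} (hg : Continuous g) (hh : Continuous h) (s t : ℝ) :
    (∫ x in a..b, (s * g x + t * h x)^2)
      = s^2 * (∫ x in a..b, g x ^ 2) + (2*s*t) * (∫ x in a..b, g x * h x)
        + t^2 * (∫ x in a..b, h x ^ 2) := by
  have i1 : IntervalIntegrable (fun x => s^2 * g x ^ 2) volume a b :=
    (continuous_const.mul (hg.pow 2)).intervalIntegrable a b
  have i2 : IntervalIntegrable (fun x => (2*s*t) * (g x * h x)) volume a b :=
    (continuous_const.mul (hg.mul hh)).intervalIntegrable a b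
  have i3 : IntervalIntegrable (fun x => t^2 * h x ^ 2) volume a b :=
    (continuous_const.mul (hh.pow 2)).intervalIntegrable a b
  have e : (∫ x in a..b, (s * g x + t * h x)^2)
      = ∫ x in a..b, (s^2 * g x ^ 2 + (2*s*t) * (g x * h x) + t^2 * h x ^ 2) := by
    apply intervalIntegral.integral_congr; intro x _; ring
  rw [e, intervalIntegral.integral_add (i1.add i2) i3, intervalIntegral.integral_add i1 i2,
    intervalIntegral.integral_const_mul, intervalIntegral.integral_const_mul,
    intervalIntegral.integral_const_mul]

lemma my_cs_sq {a b : ℝ} (hab : a ≤ b) {g h : ℝ → ℝ} (hg : Continuous g) (hh : Continuous h) :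
    (∫ x in a..b, g x * h x) ^ 2 ≤ (∫ x in a..b, g x ^ 2) * (∫ x in a..b, h x ^ 2) := by
  set A := ∫ x in a..b, g x ^ 2 with hA
  set B := ∫ x in a..b, g x * h x with hB
  set C := ∫ x in a..b, h x ^ 2 with hC
  have hCnn : 0 ≤ C := intervalIntegral.integral_nonneg hab (fun x _ => sq_nonneg _)
  have hAnn : 0 ≤ A := intervalIntegral.integral_nonneg hab (fun x _ => sq_nonneg _)
  have key : ∀ t : ℝ, 0 ≤ A + 2*t*B + t^2*C := by
    intro t
    have h1 : 0 ≤ ∫ x in a..b, (1 * g x + t * h x)^2 :=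
      intervalIntegral.integral_nonneg hab (fun x _ => sq_nonneg _)
    rw [my_expand hg hh 1 t] at h1
    calc (0:ℝ) ≤ 1^2*A + (2*1*t)*B + t^2*C := h1
      _ = A + 2*t*B + t^2*C := by ring
  rcases eq_or_lt_of_le hCnn with hC0 | hC0
  · have hB0 : B = 0 := by
      by_contra hB0
      have hk := key (-(A + 1)/B)
      rw [← hC0, mul_zero, add_zero] at hk
      have e2 : 2 * (-(A + 1)/B) * B = -2*(A+1) := by
        field_simp
      rw [e2] at hk
      linarith
    rw [hB0, ← hC0]
    simp [hAnn]
  · have hk := key (-B/C)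
    have e2 : A + 2*(-B/C)*B + (-B/C)^2*C = A - B^2/C := by
      field_simp; ring
    rw [e2, sub_nonneg, div_le_iff₀ hC0] at hk
    linarith

lemma my_cs {a b : ℝ} (hab : a ≤ b) {g h : ℝ → ℝ} (hg : Continuous g) (hh : Continuous h) :
    (∫ x in a..b, g x * h x)
      ≤ Real.sqrt (∫ x in a..b, g x ^ 2) * Real.sqrt (∫ x in a..b, h x ^ 2) := by
  have h1 := my_cs_sq hab hg hh
  have hAnn : 0 ≤ ∫ x in a..b, g x ^ 2 := intervalIntegral.integral_nonneg hab (fun x _ => sq_nonneg _)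
  calc (∫ x in a..b, g x * h x) ≤ |∫ x in a..b, g x * h x| := le_abs_self _
    _ = Real.sqrt ((∫ x in a..b, g x * h x)^2) := (Real.sqrt_sq_eq_abs _).symm
    _ ≤ Real.sqrt ((∫ x in a..b, g x ^ 2) * (∫ x in a..b, h x ^ 2)) := Real.sqrt_le_sqrt h1
    _ = _ := Real.sqrt_mul hAnn _

lemma my_triangle {a b : ℝ} (hab : a ≤ b) {g h : ℝ → ℝ} (hg : Continuous g) (hh : Continuous h) :
    Real.sqrt (∫ x in a..b, (g x + h x) ^ 2)
      ≤ Real.sqrt (∫ x in a..b, g x ^ 2) + Real.sqrt (∫ x in a..b, h x ^ 2) := by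
  set A := ∫ x in a..b, g x ^ 2 with hA
  set C := ∫ x in a..b, h x ^ 2 with hC
  have hAnn : 0 ≤ A := intervalIntegral.integral_nonneg hab (fun x _ => sq_nonneg _)
  have hCnn : 0 ≤ C := intervalIntegral.integral_nonneg hab (fun x _ => sq_nonneg _)
  have hcs := my_cs hab hg hh
  have hsq : Real.sqrt A ^ 2 = A := Real.sq_sqrt hAnn
  have hsq2 : Real.sqrt C ^ 2 = C := Real.sq_sqrt hCnn
  have e : (∫ x in a..b, (g x + h x)^2) = A + 2*(∫ x in a..b, g x * h x) + C := by
    have e' : (∫ x in a..b, (g x + h x)^2) = ∫ x in a..b, (1 * g x + 1 * h x)^2 := by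
      apply intervalIntegral.integral_congr; intro x _; ring
    rw [e', my_expand hg hh 1 1]; ring
  have hb : (∫ x in a..b, (g x + h x)^2) ≤ (Real.sqrt A + Real.sqrt C)^2 := by
    rw [e]; nlinarith [hcs, hsq, hsq2]
  calc Real.sqrt (∫ x in a..b, (g x + h x)^2) ≤ Real.sqrt ((Real.sqrt A + Real.sqrt C)^2) :=
        Real.sqrt_le_sqrt hb
    _ = Real.sqrt A + Real.sqrt C := Real.sqrt_sq (by positivity)



lemma my_alg1 {s co cc : ℝ} (hpy : s^2 + co^2 = 1) :
    -s * cc * s - co * (co * cc) = -cc := by linear_combination (-cc) * hpy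

lemma my_alg2 {s co cc W W' : ℝ} (hs : s ≠ 0) (hpy : s^2 + co^2 = 1) :
    W'^2 - cc^2*W^2
      = (W' - cc*(co/s)*W)^2 + cc*((-cc/s^2)*W^2 + (co/s)*(2*W*W')) := by
  field_simp
  ring_nf
  linear_combination (-cc^2 * W^2) * hpy

lemma my_cot_bound {y : ℝ} (h0 : 0 < y) (h1 : y < π) : y * Real.cos y ≤ Real.sin y := by
  have hsin : 0 ≤ Real.sin y := le_of_lt (Real.sin_pos_of_pos_of_lt_pi h0 h1)
  rcases le_or_gt (Real.cos y) 0 with hc | hc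
  · nlinarith
  · have hy2 : y < π/2 := by
      by_contra hy2
      push_neg at hy2
      have := Real.cos_nonpos_of_pi_div_two_le_of_le hy2 (by linarith [Real.pi_pos])
      linarith
    have ht := Real.lt_tan h0 hy2
    rw [Real.tan_eq_sin_div_cos] at ht
    have := (lt_div_iff₀ hc).mp ht
    linarith

lemma my_wirtinger {ℓ : ℝ} (hℓ : 0 < ℓ) {w w' : ℝ → ℝ}
    (hw : ∀ x, HasDerivAt w (w' x) x) (hw'c : Continuous w')
    (h0 : w 0 = 0) (hl : w ℓ = 0) :
    ∫ x in (0:ℝ)..ℓ, (w x)^2 ≤ (ℓ/π)^2 * ∫ x in (0:ℝ)..ℓ, (w' x)^2 := by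
  have hπ := Real.pi_pos
  have hwc : Continuous w := by
    rw [continuous_iff_continuousAt]; exact fun x => (hw x).continuousAt
  set c := π / ℓ with hc
  have hcpos : 0 < c := div_pos hπ hℓ
  have hcl : c * ℓ = π := div_mul_cancel₀ _ (ne_of_gt hℓ)
  -- sup bound K for |w'| on [0,ℓ]
  obtain ⟨xm, _, hKm⟩ := (isCompact_Icc (a := (0:ℝ)) (b := ℓ)).exists_isMaxOn
    (Set.nonempty_Icc.2 hℓ.le) hw'c.abs.continuousOn
  set K := |w' xm| with hKdef
  have hK : ∀ y ∈ Set.Icc (0:ℝ) ℓ, |w' y| ≤ K := fun y hy => hKm hy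
  have hKnn : 0 ≤ K := abs_nonneg _
  -- bounds on w near the endpoints
  have hwl : ∀ x ∈ Set.Icc (0:ℝ) ℓ, |w x| ≤ K * x := by
    intro x hx
    have hftc : ∫ y in (0:ℝ)..x, w' y =
        w x - w 0 := intervalIntegral.integral_eq_sub_of_hasDerivAt
      (fun y _ => hw y) (hw'c.intervalIntegrable 0 x)
    have hb : ‖∫ y in (0:ℝ)..x, w' y‖ ≤ K * |x - 0| := by
      apply intervalIntegral.norm_integral_le_of_norm_le_const
      intro y hy
      rw [Set.uIoc_of_le hx.1] at hy
      exact hK y ⟨hy.1.le, hy.2.trans hx.2⟩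
    rw [hftc, h0, sub_zero] at hb
    simpa [abs_of_nonneg hx.1] using hb
  have hwr : ∀ x ∈ Set.Icc (0:ℝ) ℓ, |w x| ≤ K * (ℓ - x) := by
    intro x hx
    have hftc : ∫ y in x..ℓ, w' y =
        w ℓ - w x := intervalIntegral.integral_eq_sub_of_hasDerivAt
      (fun y _ => hw y) (hw'c.intervalIntegrable x ℓ)
    have hb : ‖∫ y in x..ℓ, w' y‖ ≤ K * |ℓ - x| := by
      apply intervalIntegral.norm_integral_le_of_norm_le_const
      intro y hy
      rw [Set.uIoc_of_le hx.2] at hy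
      exact hK y ⟨hx.1.trans hy.1.le, hy.2⟩
    rw [hftc, hl, zero_sub, norm_neg] at hb
    simpa [abs_of_nonneg (sub_nonneg.2 hx.2)] using hb
  -- the primitive G of w'^2 - c^2 w^2
  set g : ℝ → ℝ := fun x => (w' x)^2 - c^2 * (w x)^2 with hgdef
  have hgc : Continuous g := (hw'c.pow 2).sub (continuous_const.mul (hwc.pow 2))
  set G : ℝ → ℝ := fun t => ∫ x in (0:ℝ)..t, g x with hGdef
  have hGc : Continuous G := by
    rw [continuous_iff_continuousAt]
    exact fun t => ((hgc.integral_hasStrictDerivAt 0 t).hasDerivAt).continuousAt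
  -- cot auxiliary function
  set H : ℝ → ℝ := fun x => Real.cos (c*x) / Real.sin (c*x) * (w x)^2 with hHdef
  set H' : ℝ → ℝ := fun x => (-c / Real.sin (c*x)^2) * (w x)^2
      + (Real.cos (c*x) / Real.sin (c*x)) * (2 * w x * w' x) with hH'def
  have hsin : ∀ x, 0 < x → x < ℓ → 0 < Real.sin (c*x) := by
    intro x hx1 hx2
    apply Real.sin_pos_of_pos_of_lt_pi (by positivity)
    rw [← hcl]
    exact (mul_lt_mul_iff_right₀ hcpos).2 hx2
  -- key inequality on interior intervals
  have key : ∀ a b : ℝ, 0 < a → a ≤ b → b < ℓ → c * (H b - H a) ≤ G b - G a := by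
    intro a b ha hab hb
    have hsub : Set.Icc a b ⊆ Set.Ioo 0 ℓ := fun x hx => ⟨lt_of_lt_of_le ha hx.1, lt_of_le_of_lt hx.2 hb⟩
    have hsne : ∀ x ∈ Set.Icc a b, Real.sin (c*x) ≠ 0 := fun x hx =>
      ne_of_gt (hsin x (hsub hx).1 (hsub hx).2)
    have hH : ∀ x ∈ Set.Icc a b, HasDerivAt H (H' x) x := by
      intro x hx
      have hs := hsin x (hsub hx).1 (hsub hx).2
      have hcx : HasDerivAt (fun y : ℝ => c * y) c x := by
        simpa using (hasDerivAt_id x).const_mul c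
      have hcos : HasDerivAt (fun y => Real.cos (c*y)) (-Real.sin (c*x) * c) x :=
        (Real.hasDerivAt_cos (c*x)).comp x hcx
      have hsn : HasDerivAt (fun y => Real.sin (c*y)) (Real.cos (c*x) * c) x :=
        (Real.hasDerivAt_sin (c*x)).comp x hcx
      have hcot : HasDerivAt (fun y => Real.cos (c*y) / Real.sin (c*y))
          ((-Real.sin (c*x) * c * Real.sin (c*x) - Real.cos (c*x) * (Real.cos (c*x) * c))
            / Real.sin (c*x)^2) x := hcos.div hsn (ne_of_gt hs)
      have hw2 : HasDerivAt (fun y => (w y)^2) (2 * w x * w' x) x := by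
        simpa using (hw x).fun_pow 2
      refine (hcot.fun_mul hw2).congr_deriv ?_
      simp only [hH'def]
      rw [my_alg1 (Real.sin_sq_add_cos_sq (c*x))]
    have hcotc : ContinuousOn (fun x => Real.cos (c*x) / Real.sin (c*x)) (Set.Icc a b) :=
      ContinuousOn.div (Real.continuous_cos.comp (continuous_const.mul continuous_id)).continuousOn
        (Real.continuous_sin.comp (continuous_const.mul continuous_id)).continuousOn hsne
    have hH'c : ContinuousOn H' (Set.Icc a b) := by
      apply ContinuousOn.add
      · exact ContinuousOn.mul (ContinuousOn.div continuousOn_const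
          (((Real.continuous_sin.comp (continuous_const.mul continuous_id)).pow 2).continuousOn)
          (fun x hx => pow_ne_zero 2 (hsne x hx))) (hwc.pow 2).continuousOn
      · exact hcotc.mul (((continuous_const.mul hwc).mul hw'c).continuousOn)
    have hH'i : IntervalIntegrable H' volume a b := by
      apply ContinuousOn.intervalIntegrable
      rwa [Set.uIcc_of_le hab]
    have hftc : ∫ x in a..b, H' x = H b - H a := by
      apply intervalIntegral.integral_eq_sub_of_hasDerivAt _ hH'i
      intro x hx
      rw [Set.uIcc_of_le hab] at hx
      exact hH x hx
    have hGab : G b - G a = ∫ x in a..b, g x := by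
      simp only [hGdef]
      rw [← intervalIntegral.integral_interval_sub_left (hgc.intervalIntegrable 0 b)
        (hgc.intervalIntegrable 0 a)]
    have hsq : IntervalIntegrable (fun x => (w' x - c * (Real.cos (c*x)/Real.sin (c*x)) * w x)^2)
        volume a b := by
      apply ContinuousOn.intervalIntegrable
      rw [Set.uIcc_of_le hab]
      exact ((hw'c.continuousOn.sub ((continuousOn_const.mul hcotc).mul
        hwc.continuousOn))).pow 2
    have hdecomp : ∀ x ∈ Set.Icc a b,
        g x = (w' x - c * (Real.cos (c*x)/Real.sin (c*x)) * w x)^2 + c * H' x := by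
      intro x hx
      have hs := hsin x (hsub hx).1 (hsub hx).2
      simp only [hgdef, hH'def]
      exact my_alg2 (ne_of_gt hs) (Real.sin_sq_add_cos_sq (c*x))
    have he : ∫ x in a..b, g x
        = (∫ x in a..b, (w' x - c * (Real.cos (c*x)/Real.sin (c*x)) * w x)^2)
          + c * (H b - H a) := by
      rw [← hftc, ← intervalIntegral.integral_const_mul,
        ← intervalIntegral.integral_add hsq (hH'i.const_mul c)]
      apply intervalIntegral.integral_congr
      intro x hx
      rw [Set.uIcc_of_le hab] at hx
      exact hdecomp x hx
    have hnn : 0 ≤ ∫ x in a..b, (w' x - c * (Real.cos (c*x)/Real.sin (c*x)) * w x)^2 :=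
      intervalIntegral.integral_nonneg hab (fun x _ => sq_nonneg _)
    rw [hGab, he]
    linarith
  -- boundary estimates
  have hbdd : ∀ ε : ℝ, 0 < ε → ε < ℓ/2 → -(2*K^2*ε) ≤ G (ℓ - ε) - G ε := by
    intro ε hε hε2
    have hεl : ε < ℓ := by linarith
    have h1 : 0 < c * ε := by positivity
    have h2 : c * ε < π := by rw [← hcl]; exact (mul_lt_mul_iff_right₀ hcpos).2 hεl
    have hsε := hsin ε hε hεl
    have hcb := my_cot_bound h1 h2
    -- cot (cε) ≤ 1/(cε)
    have hcot1 : Real.cos (c*ε) / Real.sin (c*ε) ≤ 1/(c*ε) := by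
      rw [div_le_div_iff₀ hsε h1]
      linarith
    -- H ε ≤ K^2 * ε / c
    have hwε : |w ε| ≤ K * ε := hwl ε ⟨hε.le, hεl.le⟩
    have hwε2 : (w ε)^2 ≤ (K*ε)^2 := by
      have h4 := abs_le.1 hwε
      exact sq_le_sq' h4.1 h4.2
    have hHε : H ε ≤ K^2 * ε / c := by
      simp only [hHdef]
      calc Real.cos (c*ε) / Real.sin (c*ε) * (w ε)^2 ≤ 1/(c*ε) * (w ε)^2 := by
            exact mul_le_mul_of_nonneg_right hcot1 (sq_nonneg _)
        _ ≤ 1/(c*ε) * (K*ε)^2 := by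
            apply mul_le_mul_of_nonneg_left hwε2; positivity
        _ = K^2 * ε / c := by field_simp
    -- H (ℓ - ε) ≥ - K^2 * ε / c
    have hbnd : c * (ℓ - ε) = π - c * ε := by rw [mul_sub, hcl]
    have hHb : -(K^2 * ε / c) ≤ H (ℓ - ε) := by
      simp only [hHdef, hbnd, Real.cos_pi_sub, Real.sin_pi_sub]
      have hwb2 : (w (ℓ-ε))^2 ≤ (K*ε)^2 := by
        have h3 := hwr (ℓ-ε) ⟨by linarith, by linarith⟩
        rw [show ℓ - (ℓ-ε) = ε by ring] at h3
        have h4 := abs_le.1 h3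
        exact sq_le_sq' h4.1 h4.2
      have hcot2 : -(1/(c*ε)) ≤ -Real.cos (c*ε) / Real.sin (c*ε) := by
        rw [neg_div, neg_le_neg_iff]
        exact hcot1
      calc -(K^2 * ε / c) = -(1/(c*ε)) * (K*ε)^2 := by field_simp
        _ ≤ -(1/(c*ε)) * (w (ℓ-ε))^2 := by
            have hpos : (0:ℝ) ≤ 1/(c*ε) := by positivity
            nlinarith [hwb2]
        _ ≤ -Real.cos (c*ε) / Real.sin (c*ε) * (w (ℓ-ε))^2 :=
            mul_le_mul_of_nonneg_right hcot2 (sq_nonneg _)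
    have hkey := key ε (ℓ - ε) hε (by linarith) (by linarith)
    have hcH : c * (-(K^2*ε/c) - K^2*ε/c) ≤ c * (H (ℓ-ε) - H ε) := by
      apply mul_le_mul_of_nonneg_left _ hcpos.le
      linarith
    have hval : c * (-(K^2*ε/c) - K^2*ε/c) = -(2*K^2*ε) := by field_simp; ring
    rw [hval] at hcH
    linarith
  -- limit as ε → 0⁺
  have hlim : Filter.Tendsto (fun ε => G (ℓ - ε) - G ε + 2*K^2*ε) (nhdsWithin 0 (Set.Ioi 0))
      (nhds (G ℓ)) := by
    have hcont : Continuous (fun ε => G (ℓ - ε) - G ε + 2*K^2*ε) := by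
      exact ((hGc.comp (continuous_const.sub continuous_id)).sub hGc).add
        (continuous_const.mul continuous_id)
    have h2 : Filter.Tendsto (fun ε => G (ℓ - ε) - G ε + 2*K^2*ε) (nhds 0)
        (nhds (G (ℓ - 0) - G 0 + 2*K^2*0)) := (hcont.continuousAt (x := (0:ℝ)))
    have hG0 : G 0 = 0 := intervalIntegral.integral_same
    rw [sub_zero, hG0, sub_zero, mul_zero, add_zero] at h2
    exact h2.mono_left nhdsWithin_le_nhds
  have hev : ∀ᶠ ε in nhdsWithin (0:ℝ) (Set.Ioi 0),
      (0:ℝ) ≤ G (ℓ - ε) - G ε + 2*K^2*ε := by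
    filter_upwards [Ioo_mem_nhdsGT_of_mem
      (show (0:ℝ) ∈ Set.Ico (0:ℝ) (ℓ/2) from Set.mem_Ico.2 ⟨le_refl (0:ℝ), by linarith⟩)] with ε hε
    have h6 := hbdd ε hε.1 hε.2
    linarith
  have hGl : (0:ℝ) ≤ G ℓ := ge_of_tendsto hlim hev
  -- conclude
  have hsplit : G ℓ = (∫ x in (0:ℝ)..ℓ, (w' x)^2) - c^2 * ∫ x in (0:ℝ)..ℓ, (w x)^2 := by
    have e1 : G ℓ = ∫ x in (0:ℝ)..ℓ, ((w' x)^2 - c^2 * (w x)^2) := rfl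
    rw [e1, intervalIntegral.integral_sub (f := fun x => (w' x)^2) (g := fun x => c^2 * (w x)^2) ((hw'c.pow 2).intervalIntegrable 0 ℓ)
      ((continuous_const.mul (hwc.pow 2)).intervalIntegrable 0 ℓ),
      intervalIntegral.integral_const_mul]
  rw [hsplit] at hGl
  have hc2 : (ℓ/π)^2 * c^2 = 1 := by
    rw [hc]; field_simp
  have h2 : (0:ℝ) < (ℓ/π)^2 := by positivity
  have h3 := mul_le_mul_of_nonneg_left hGl h2.le
  have h4 : (ℓ/π)^2 * (c^2 * ∫ x in (0:ℝ)..ℓ, (w x)^2) = ∫ x in (0:ℝ)..ℓ, (w x)^2 := by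
    rw [← mul_assoc, hc2, one_mul]
  have h5 : (ℓ/π)^2 * ((∫ x in (0:ℝ)..ℓ, (w' x)^2) - c^2 * ∫ x in (0:ℝ)..ℓ, (w x)^2)
      = (ℓ/π)^2 * (∫ x in (0:ℝ)..ℓ, (w' x)^2)
        - (ℓ/π)^2 * (c^2 * ∫ x in (0:ℝ)..ℓ, (w x)^2) := by ring
  linarith

set_option maxHeartbeats 1000000

theorem stmt19 (ℓ p₀ q₀ : ℝ) (hℓ : 0 < ℓ) (hp₀ : 0 < p₀) (hq₀ : 0 < q₀)
    (p p' q f w w' w'' : ℝ → ℝ)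
    (hp : ∀ x, HasDerivAt p (p' x) x)
    (hw : ∀ x, HasDerivAt w (w' x) x) (hw' : ∀ x, HasDerivAt w' (w'' x) x)
    (hp'c : Continuous p') (hqc : Continuous q) (hfc : Continuous f)
    (hw''c : Continuous w'')
    (hpl : ∀ x ∈ Set.Icc (0 : ℝ) ℓ, p₀ ≤ p x)
    (hql : ∀ x ∈ Set.Icc (0 : ℝ) ℓ, q₀ ≤ q x)
    (hode : ∀ x ∈ Set.Icc (0 : ℝ) ℓ, p' x * w' x + p x * w'' x - q x * w x = f x)
    (h0 : w 0 = 0) (hl : w ℓ = 0) :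
    Real.sqrt (∫ x in (0 : ℝ)..ℓ, (w'' x) ^ 2) ≤
      (p₀ ^ 2)⁻¹ *
          ((ℓ / Real.pi) * sSup ((fun x => |p' x|) '' Set.Icc (0 : ℝ) ℓ) +
            (ℓ ^ 2 / Real.pi ^ 2) * sSup (q '' Set.Icc (0 : ℝ) ℓ) + p₀) *
        Real.sqrt (∫ x in (0 : ℝ)..ℓ, (f x) ^ 2) := by
  have hπ := Real.pi_pos
  have hab : (0:ℝ) ≤ ℓ := hℓ.le
  have hicc : Set.uIcc (0:ℝ) ℓ = Set.Icc (0:ℝ) ℓ := Set.uIcc_of_le hab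
  have hwc : Continuous w := by
    rw [continuous_iff_continuousAt]; exact fun x => (hw x).continuousAt
  have hw'c : Continuous w' := by
    rw [continuous_iff_continuousAt]; exact fun x => (hw' x).continuousAt
  have hpc : Continuous p := by
    rw [continuous_iff_continuousAt]; exact fun x => (hp x).continuousAt
  have hne : (Set.Icc (0:ℝ) ℓ).Nonempty := Set.nonempty_Icc.2 hab
  -- sup bounds
  set M1 := sSup ((fun x => |p' x|) '' Set.Icc (0 : ℝ) ℓ) with hM1def
  set M2 := sSup (q '' Set.Icc (0 : ℝ) ℓ) with hM2def
  have hbdd1 : BddAbove ((fun x => |p' x|) '' Set.Icc (0 : ℝ) ℓ) :=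
    (isCompact_Icc.image_of_continuousOn hp'c.abs.continuousOn).bddAbove
  have hbdd2 : BddAbove (q '' Set.Icc (0 : ℝ) ℓ) :=
    (isCompact_Icc.image_of_continuousOn hqc.continuousOn).bddAbove
  have hM1 : ∀ x ∈ Set.Icc (0:ℝ) ℓ, |p' x| ≤ M1 := fun x hx =>
    le_csSup hbdd1 (Set.mem_image_of_mem _ hx)
  have hM2 : ∀ x ∈ Set.Icc (0:ℝ) ℓ, q x ≤ M2 := fun x hx =>
    le_csSup hbdd2 (Set.mem_image_of_mem _ hx)
  have hM1nn : 0 ≤ M1 := le_trans (abs_nonneg _) (hM1 0 ⟨le_refl _, hab⟩)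
  have hM2nn : 0 ≤ M2 := le_trans hq₀.le (le_trans (hql 0 ⟨le_refl _, hab⟩) (hM2 0 ⟨le_refl _, hab⟩))
  -- norms
  set Z := Real.sqrt (∫ x in (0:ℝ)..ℓ, (f x)^2) with hZdef
  set X := Real.sqrt (∫ x in (0:ℝ)..ℓ, (w' x)^2) with hXdef
  set Y := Real.sqrt (∫ x in (0:ℝ)..ℓ, (w x)^2) with hYdef
  have hZnn : 0 ≤ Z := Real.sqrt_nonneg _
  have hXnn : 0 ≤ X := Real.sqrt_nonneg _
  have hYnn : 0 ≤ Y := Real.sqrt_nonneg _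
  have hXsq : X^2 = ∫ x in (0:ℝ)..ℓ, (w' x)^2 :=
    Real.sq_sqrt (intervalIntegral.integral_nonneg hab (fun x _ => sq_nonneg _))
  have hYsq : Y^2 = ∫ x in (0:ℝ)..ℓ, (w x)^2 :=
    Real.sq_sqrt (intervalIntegral.integral_nonneg hab (fun x _ => sq_nonneg _))
  -- energy identity
  have hener : (∫ x in (0:ℝ)..ℓ, f x * w x) + (∫ x in (0:ℝ)..ℓ, q x * (w x)^2)
      + (∫ x in (0:ℝ)..ℓ, p x * (w' x)^2) = 0 := by
    have hu : ∀ x, HasDerivAt (fun y => p y * w' y * w y)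
        ((p' x * w' x + p x * w'' x) * w x + (p x * w' x) * w' x) x :=
      fun x => ((hp x).mul (hw' x)).mul (hw x)
    have hic : Continuous (fun x => (p' x * w' x + p x * w'' x) * w x + (p x * w' x) * w' x) :=
      (((hp'c.mul hw'c).add (hpc.mul hw''c)).mul hwc).add ((hpc.mul hw'c).mul hw'c)
    have hftc : ∫ x in (0:ℝ)..ℓ, ((p' x * w' x + p x * w'' x) * w x + (p x * w' x) * w' x)
        = p ℓ * w' ℓ * w ℓ - p 0 * w' 0 * w 0 :=
      intervalIntegral.integral_eq_sub_of_hasDerivAt (fun x _ => hu x)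
        (hic.intervalIntegrable 0 ℓ)
    rw [hl, h0, mul_zero, mul_zero, sub_zero] at hftc
    have hcongr : ∫ x in (0:ℝ)..ℓ, ((p' x * w' x + p x * w'' x) * w x + (p x * w' x) * w' x)
        = ∫ x in (0:ℝ)..ℓ, (f x * w x + q x * (w x)^2 + p x * (w' x)^2) := by
      apply intervalIntegral.integral_congr
      intro x hx
      rw [hicc] at hx
      have := hode x hx
      have e : p' x * w' x + p x * w'' x = f x + q x * w x := by linarith
      show (p' x * w' x + p x * w'' x) * w x + (p x * w' x) * w' x
        = f x * w x + q x * (w x)^2 + p x * (w' x)^2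
      rw [e]; ring
    rw [hcongr] at hftc
    have i1 : IntervalIntegrable (fun x => f x * w x) MeasureTheory.volume 0 ℓ :=
      (hfc.mul hwc).intervalIntegrable 0 ℓ
    have i2 : IntervalIntegrable (fun x => q x * (w x)^2) MeasureTheory.volume 0 ℓ :=
      (hqc.mul (hwc.pow 2)).intervalIntegrable 0 ℓ
    have i3 : IntervalIntegrable (fun x => p x * (w' x)^2) MeasureTheory.volume 0 ℓ :=
      (hpc.mul (hw'c.pow 2)).intervalIntegrable 0 ℓ
    rw [intervalIntegral.integral_add (i1.add i2) i3, intervalIntegral.integral_add i1 i2] at hftc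
    linarith [hftc]
  -- Cauchy-Schwarz bound on -∫ f w
  have hcs : -(∫ x in (0:ℝ)..ℓ, f x * w x) ≤ Z * Y := by
    have h1 := my_cs hab (g := fun x => -f x) (hfc.neg) hwc
    have e1 : (∫ x in (0:ℝ)..ℓ, (-f x) * w x) = -(∫ x in (0:ℝ)..ℓ, f x * w x) := by
      rw [← intervalIntegral.integral_neg]
      apply intervalIntegral.integral_congr; intro x _; ring
    have e2 : (∫ x in (0:ℝ)..ℓ, (-f x)^2) = ∫ x in (0:ℝ)..ℓ, (f x)^2 := by
      apply intervalIntegral.integral_congr; intro x _; ring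
    rw [e1, e2] at h1
    exact h1
  have hqnn : 0 ≤ ∫ x in (0:ℝ)..ℓ, q x * (w x)^2 :=
    intervalIntegral.integral_nonneg hab (fun x hx =>
      mul_nonneg (le_trans hq₀.le (hql x hx)) (sq_nonneg _))
  have hpw : p₀ * X^2 ≤ ∫ x in (0:ℝ)..ℓ, p x * (w' x)^2 := by
    rw [hXsq, ← intervalIntegral.integral_const_mul]
    apply intervalIntegral.integral_mono_on hab
      ((continuous_const.mul (hw'c.pow 2)).intervalIntegrable 0 ℓ)
      ((hpc.mul (hw'c.pow 2)).intervalIntegrable 0 ℓ)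
    intro x hx
    exact mul_le_mul_of_nonneg_right (hpl x hx) (sq_nonneg _)
  have hbasic : p₀ * X^2 ≤ Z * Y := by linarith
  -- Wirtinger
  have hwirt := my_wirtinger hℓ hw hw'c h0 hl
  have hYX : Y ≤ (ℓ/Real.pi) * X := by
    have h1 : Y ≤ Real.sqrt ((ℓ/Real.pi)^2 * ∫ x in (0:ℝ)..ℓ, (w' x)^2) :=
      Real.sqrt_le_sqrt hwirt
    rwa [Real.sqrt_mul (sq_nonneg _), Real.sqrt_sq (by positivity), ← hXdef] at h1
  -- X and Y bounds
  have hX : X ≤ ℓ/(Real.pi*p₀) * Z := by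
    rcases eq_or_lt_of_le hXnn with hX0 | hX0
    · rw [← hX0]; positivity
    · have h1 : p₀ * X * X ≤ (ℓ/Real.pi) * Z * X := by
        have h2 : Z * Y ≤ Z * ((ℓ/Real.pi) * X) := mul_le_mul_of_nonneg_left hYX hZnn
        nlinarith [hbasic]
      have h3 : p₀ * X ≤ (ℓ/Real.pi) * Z := le_of_mul_le_mul_right h1 hX0
      have e : ℓ/(Real.pi*p₀) * Z - X = ((ℓ/Real.pi) * Z - p₀ * X) / p₀ := by
        field_simp
      have h4 : 0 ≤ ℓ/(Real.pi*p₀) * Z - X := by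
        rw [e]; exact div_nonneg (by linarith) hp₀.le
      linarith
  have hY : Y ≤ ℓ^2/(Real.pi^2*p₀) * Z := by
    calc Y ≤ (ℓ/Real.pi) * X := hYX
      _ ≤ (ℓ/Real.pi) * (ℓ/(Real.pi*p₀) * Z) := by
          apply mul_le_mul_of_nonneg_left hX; positivity
      _ = ℓ^2/(Real.pi^2*p₀) * Z := by field_simp
  -- second derivative bound
  have hS2 : p₀^2 * (∫ x in (0:ℝ)..ℓ, (w'' x)^2) ≤ ∫ x in (0:ℝ)..ℓ, (p x * w'' x)^2 := by
    rw [← intervalIntegral.integral_const_mul]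
    apply intervalIntegral.integral_mono_on hab
      ((continuous_const.mul (hw''c.pow 2)).intervalIntegrable 0 ℓ)
      (((hpc.mul hw''c).pow 2).intervalIntegrable 0 ℓ)
    intro x hx
    have h1 := hpl x hx
    have h2 : p₀^2 ≤ (p x)^2 := by nlinarith
    show p₀^2 * (w'' x)^2 ≤ (p x * w'' x)^2
    nlinarith [sq_nonneg (w'' x), h2]
  have hcongr2 : (∫ x in (0:ℝ)..ℓ, (p x * w'' x)^2)
      = ∫ x in (0:ℝ)..ℓ, (f x + (q x * w x + -(p' x * w' x)))^2 := by
    apply intervalIntegral.integral_congr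
    intro x hx
    rw [hicc] at hx
    have := hode x hx
    have e : p x * w'' x = f x + (q x * w x + -(p' x * w' x)) := by linarith
    show (p x * w'' x)^2 = (f x + (q x * w x + -(p' x * w' x)))^2
    rw [e]
  have htri1 : Real.sqrt (∫ x in (0:ℝ)..ℓ, (f x + (q x * w x + -(p' x * w' x)))^2)
      ≤ Z + Real.sqrt (∫ x in (0:ℝ)..ℓ, (q x * w x + -(p' x * w' x))^2) :=
    my_triangle hab hfc ((hqc.mul hwc).add (hp'c.mul hw'c).neg)
  have htri2 : Real.sqrt (∫ x in (0:ℝ)..ℓ, (q x * w x + -(p' x * w' x))^2)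
      ≤ Real.sqrt (∫ x in (0:ℝ)..ℓ, (q x * w x)^2)
        + Real.sqrt (∫ x in (0:ℝ)..ℓ, (-(p' x * w' x))^2) :=
    my_triangle hab (hqc.mul hwc) (hp'c.mul hw'c).neg
  have hqw : Real.sqrt (∫ x in (0:ℝ)..ℓ, (q x * w x)^2) ≤ M2 * Y := by
    have h1 : (∫ x in (0:ℝ)..ℓ, (q x * w x)^2) ≤ M2^2 * ∫ x in (0:ℝ)..ℓ, (w x)^2 := by
      rw [← intervalIntegral.integral_const_mul]
      apply intervalIntegral.integral_mono_on hab
        (((hqc.mul hwc).pow 2).intervalIntegrable 0 ℓ)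
        ((continuous_const.mul (hwc.pow 2)).intervalIntegrable 0 ℓ)
      intro x hx
      have h2 := hM2 x hx
      have h3 := le_trans hq₀.le (hql x hx)
      have h4 : (q x)^2 ≤ M2^2 := by nlinarith
      show (q x * w x)^2 ≤ M2^2 * (w x)^2
      nlinarith [sq_nonneg (w x), h4]
    calc Real.sqrt (∫ x in (0:ℝ)..ℓ, (q x * w x)^2)
        ≤ Real.sqrt (M2^2 * ∫ x in (0:ℝ)..ℓ, (w x)^2) := Real.sqrt_le_sqrt h1
      _ = M2 * Y := by rw [Real.sqrt_mul (sq_nonneg _), Real.sqrt_sq hM2nn, ← hYdef]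
  have hpw' : Real.sqrt (∫ x in (0:ℝ)..ℓ, (-(p' x * w' x))^2) ≤ M1 * X := by
    have h1 : (∫ x in (0:ℝ)..ℓ, (-(p' x * w' x))^2) ≤ M1^2 * ∫ x in (0:ℝ)..ℓ, (w' x)^2 := by
      rw [← intervalIntegral.integral_const_mul]
      apply intervalIntegral.integral_mono_on hab
        ((((hp'c.mul hw'c).neg).pow 2).intervalIntegrable 0 ℓ)
        ((continuous_const.mul (hw'c.pow 2)).intervalIntegrable 0 ℓ)
      intro x hx
      have h2 := hM1 x hx
      have h3 := abs_nonneg (p' x)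
      have h4 : (p' x)^2 ≤ M1^2 := by
        have := sq_abs (p' x)
        nlinarith
      show (-(p' x * w' x))^2 ≤ M1^2 * (w' x)^2
      nlinarith [sq_nonneg (w' x), h4]
    calc Real.sqrt (∫ x in (0:ℝ)..ℓ, (-(p' x * w' x))^2)
        ≤ Real.sqrt (M1^2 * ∫ x in (0:ℝ)..ℓ, (w' x)^2) := Real.sqrt_le_sqrt h1
      _ = M1 * X := by rw [Real.sqrt_mul (sq_nonneg _), Real.sqrt_sq hM1nn, ← hXdef]
  -- assemble
  set S := Real.sqrt (∫ x in (0:ℝ)..ℓ, (w'' x)^2) with hSdef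
  have hSnn : 0 ≤ S := Real.sqrt_nonneg _
  have hkey : p₀ * S ≤ Z + M2 * (ℓ^2/(Real.pi^2*p₀) * Z) + M1 * (ℓ/(Real.pi*p₀) * Z) := by
    have h1 : p₀ * S = Real.sqrt (p₀^2 * ∫ x in (0:ℝ)..ℓ, (w'' x)^2) := by
      rw [Real.sqrt_mul (sq_nonneg _), Real.sqrt_sq hp₀.le, ← hSdef]
    have h2 : Real.sqrt (p₀^2 * ∫ x in (0:ℝ)..ℓ, (w'' x)^2)
        ≤ Real.sqrt (∫ x in (0:ℝ)..ℓ, (f x + (q x * w x + -(p' x * w' x)))^2) := by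
      apply Real.sqrt_le_sqrt
      rw [← hcongr2]
      exact hS2
    have h3 : Real.sqrt (p₀^2 * ∫ x in (0:ℝ)..ℓ, (w'' x)^2) ≤ Z + (M2 * Y + M1 * X) := by
      have h3a := le_trans h2 htri1
      linarith [htri2, hqw, hpw']
    have h4 : M2 * Y ≤ M2 * (ℓ^2/(Real.pi^2*p₀) * Z) := mul_le_mul_of_nonneg_left hY hM2nn
    have h5 : M1 * X ≤ M1 * (ℓ/(Real.pi*p₀) * Z) := mul_le_mul_of_nonneg_left hX hM1nn
    calc p₀ * S ≤ Z + (M2 * Y + M1 * X) := by rw [h1]; exact h3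
      _ ≤ _ := by linarith
  have hfin : S ≤ ((Z + M2 * (ℓ^2/(Real.pi^2*p₀) * Z) + M1 * (ℓ/(Real.pi*p₀) * Z))) / p₀ :=
    (le_div_iff₀ hp₀).2 (by linarith [hkey])
  calc S ≤ ((Z + M2 * (ℓ^2/(Real.pi^2*p₀) * Z) + M1 * (ℓ/(Real.pi*p₀) * Z))) / p₀ := hfin
    _ = (p₀ ^ 2)⁻¹ * ((ℓ / Real.pi) * M1 + (ℓ ^ 2 / Real.pi ^ 2) * M2 + p₀) * Z := by
        field_simp
        ring
end
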